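/- arXiv:1204.1606 — 3 statements merged into one kernel-verified Lean document; each statement's English description precedes it below -/
import Mathlib

section
/- Let C be a cochain complex of locally finite B-modules such that C^i = 0 for i > 0, the cohomology H^i(C) vanishes for all i ≠ 0, and H^0(C) is finite-dimensional over k. Then there exists a subcomplex D of C such that every term D^i is finite-dimensional over k and the inclusion morphism D ↪ C is a quasi-isomorphism. -/
/-!
`k` is a field and `B` an associative unital `k`-algebra.  A `B`-module is
*finite-dimensional* if its underlying `k`-vector space (via the algebra map) is
finite-dimensional; it is *locally finite* if it is the union of its finite-dimensional
`B`-submodules.  A subcomplex of a cochain complex `C` is formalized as a complex `D`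
together with a morphism `D ⟶ C` that is a monomorphism in each degree.
-/

open CategoryTheory

variable (k : Type) [Field k] {B : Type} [Ring B] [Algebra k B]

/-- A `B`-module is finite-dimensional if the underlying `k`-vector space is. -/
def IsFinDimOver (M : ModuleCat.{0} B) : Prop :=
  FiniteDimensional k ((ModuleCat.restrictScalars (algebraMap k B)).obj M)

/-- A `B`-module is locally finite if every element lies in a `B`-submodule that is
finite-dimensional over `k`. -/
def IsLocFinOver (M : ModuleCat.{0} B) : Prop :=
  ∀ x : M, ∃ N : Submodule B M, x ∈ N ∧ IsFinDimOver k (ModuleCat.of B ↥N)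

namespace St8
open Limits

noncomputable abbrev Fr : ModuleCat.{0} B ⥤ ModuleCat.{0} k :=
  ModuleCat.restrictScalars (algebraMap k B)

abbrev FD {M : ModuleCat.{0} B} (N : Submodule B M) : Prop := IsFinDimOver k (ModuleCat.of B ↥N)

lemma fd_mono {M : ModuleCat.{0} B} {N N' : Submodule B M} (h : N ≤ N') (hN' : FD k N') :
    FD k N := by
  haveI : FiniteDimensional k ((Fr k).obj (ModuleCat.of B ↥N')) := hN'
  exact FiniteDimensional.of_injective
    ((Fr k).map (ModuleCat.ofHom (Submodule.inclusion h))).hom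
    (Submodule.inclusion_injective h)

lemma fd_bot {M : ModuleCat.{0} B} : FD k (⊥ : Submodule B M) := by
  show FiniteDimensional k _
  haveI : Subsingleton ((Fr k).obj (ModuleCat.of B ↥(⊥ : Submodule B M))) := by
    change Subsingleton ↥(⊥ : Submodule B M)
    infer_instance
  infer_instance

lemma fd_sup {M : ModuleCat.{0} B} {N N' : Submodule B M} (hN : FD k N) (hN' : FD k N') :
    FD k (N ⊔ N') := by
  haveI : FiniteDimensional k ((Fr k).obj (ModuleCat.of B ↥N)) := hN
  haveI : FiniteDimensional k ((Fr k).obj (ModuleCat.of B ↥N')) := hN'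
  refine Module.Finite.of_surjective
    (LinearMap.coprod ((Fr k).map (ModuleCat.ofHom (Submodule.inclusion (le_sup_left : N ≤ N ⊔ N')))).hom
      ((Fr k).map (ModuleCat.ofHom (Submodule.inclusion (le_sup_right : N' ≤ N ⊔ N')))).hom) ?_
  rintro ⟨x, hx⟩
  rw [Submodule.mem_sup] at hx
  obtain ⟨y, hy, z, hz, rfl⟩ := hx
  exact ⟨(⟨y, hy⟩, ⟨z, hz⟩), Subtype.ext rfl⟩

lemma fd_finsetSup {M : ModuleCat.{0} B} {α : Type} (s : Finset α) (f : α → Submodule B M)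
    (hf : ∀ a ∈ s, FD k (f a)) : FD k (s.sup f) := by
  classical
  induction s using Finset.induction_on with
  | empty => simpa using fd_bot k
  | @insert a s ha ih =>
    rw [Finset.sup_insert]
    exact fd_sup k (hf a (by simp)) (ih fun b hb => hf b (by simp [hb]))

/-- everything in the `k`-span of a subset of a `B`-submodule is in the submodule -/
lemma span_le_submodule {M : ModuleCat.{0} B} (P : Submodule B M) (s : Set ((Fr k).obj M))
    (hs : ∀ x ∈ s, (x : M) ∈ P) : ∀ x ∈ Submodule.span k s, (x : M) ∈ P := by
  intro x hx
  induction hx using Submodule.span_induction with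
  | mem x h => exact hs x h
  | zero => exact P.zero_mem
  | add x y _ _ hx hy => exact P.add_mem hx hy
  | smul c x _ hx => exact P.smul_mem (algebraMap k B c) hx

lemma exists_fd_submodule_span {M : ModuleCat.{0} B} (hM : IsLocFinOver k M)
    (s : Finset ((Fr k).obj M)) :
    ∃ P : Submodule B M, FD k P ∧ ∀ x ∈ s, (x : M) ∈ P := by
  classical
  refine ⟨s.sup (fun x => (hM (x : M)).choose), fd_finsetSup k s _ (fun a _ => (hM _).choose_spec.2), ?_⟩
  intro x hx
  exact Finset.le_sup (f := fun x => (hM (x : M)).choose) hx (hM (x : M)).choose_spec.1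

variable {C : CochainComplex (ModuleCat.{0} B) ℤ}

lemma step (hlf : ∀ i : ℤ, IsLocFinOver k (C.X i)) (i j : ℤ)
    {P : Submodule B (C.X i)} (hP : FD k P) :
    ∃ N : Submodule B (C.X j), FD k N ∧ (∀ x ∈ N, C.d j i x ∈ P) ∧
      (∀ y ∈ P, y ∈ LinearMap.range (C.d j i).hom →
        ∃ x ∈ N, C.d j i x = y) := by
  classical
  set V : Submodule B (C.X i) := P ⊓ LinearMap.range (C.d j i).hom with hV
  haveI : FiniteDimensional k ((Fr k).obj (ModuleCat.of B ↥V)) := fd_mono k inf_le_left hP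
  obtain ⟨s, hs⟩ : (⊤ : Submodule k ((Fr k).obj (ModuleCat.of B ↥V))).FG := Module.Finite.fg_top
  -- a preimage function
  have hpre : ∀ v : V, ∃ x : C.X j, C.d j i x = (v : C.X i) := fun v => v.2.2
  choose pre hpre' using hpre
  obtain ⟨P', hP', hP'mem⟩ := exists_fd_submodule_span k (hlf j)
    (s.image (fun v => (pre v : ((Fr k).obj (C.X j) : Type))))
  refine ⟨P' ⊓ Submodule.comap (C.d j i).hom P,
    fd_mono k inf_le_left hP', fun x hx => hx.2, ?_⟩
  intro y hy hyr
  have hyV : (⟨y, ⟨hy, hyr⟩⟩ : V) ∈ Submodule.span k (s : Set ((Fr k).obj (ModuleCat.of B ↥V))) := by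
    rw [hs]; trivial
  set N := P' ⊓ Submodule.comap (C.d j i).hom P with hN
  have key := span_le_submodule k (M := ModuleCat.of B ↥V)
    (Submodule.comap (V.subtype : ↥V →ₗ[B] C.X i) (Submodule.map (C.d j i).hom N))
    (s : Set ((Fr k).obj (ModuleCat.of B ↥V))) ?_ _ hyV
  · have key' : y ∈ Submodule.map (C.d j i).hom N := (Submodule.mem_comap (f := (V.subtype : ↥V →ₗ[B] C.X i))).mp key
    obtain ⟨x, hx, hx'⟩ := Submodule.mem_map.mp key'
    exact ⟨x, hx, hx'⟩
  · intro v hv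
    have h1 : pre v ∈ P' := hP'mem _ (Finset.mem_image_of_mem _ hv)
    have h2 : C.d j i (pre v) ∈ P := by rw [hpre' v]; exact v.2.1
    have h3 : pre v ∈ N := ⟨h1, h2⟩
    have h4 := Submodule.mem_map_of_mem (f := (C.d j i).hom) h3
    rw [hpre' v] at h4
    exact (Submodule.mem_comap (f := (V.subtype : ↥V →ₗ[B] C.X i))).mpr h4
lemma isZero_eq_zero {M : ModuleCat.{0} B} (h : IsZero M) (x : M) : x = 0 := by
  have h1 : (𝟙 M : M ⟶ M) = 0 := h.eq_of_src _ _
  calc x = (𝟙 M : M ⟶ M) x := rfl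
  _ = (0 : M ⟶ M) x := by rw [h1]
  _ = 0 := rfl

lemma exists_P0 (hlf : ∀ i : ℤ, IsLocFinOver k (C.X i))
    (hpos : ∀ i : ℤ, 0 < i → Limits.IsZero (C.X i))
    (hfd : IsFinDimOver k (C.homology 0)) :
    ∃ P : Submodule B (C.X 0), FD k P ∧
      ∀ x : C.X 0, ∃ p ∈ P, x - p ∈ LinearMap.range (C.d (-1) 0).hom := by
  classical
  set dm : C.X (-1) →ₗ[B] C.X 0 := (C.d (-1) 0).hom with hdm
  set Q0 : ModuleCat.{0} B := ModuleCat.of B ((C.X 0) ⧸ LinearMap.range dm) with hQ0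
  set S : ShortComplex (ModuleCat.{0} B) := C.sc' (-1) 0 1 with hS
  -- homology of C at 0 is isomorphic to S's homology
  have e1 : C.homology 0 ≅ S.homology :=
    ShortComplex.homologyMapIso (HomologicalComplex.isoSc' C (-1) 0 1
      ((ComplexShape.up ℤ).prev_eq' (by simp)) ((ComplexShape.up ℤ).next_eq' (by simp)))
  -- the quotient map from concrete homology to Q0
  have hcond : LinearMap.range S.moduleCatToCycles ≤
      Submodule.comap ((LinearMap.range dm).mkQ.comp (LinearMap.ker S.g.hom).subtype)
        (⊥ : Submodule B Q0) := by
    rintro x ⟨x₁, rfl⟩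
    refine Submodule.mem_comap.mpr ?_
    rw [Submodule.mem_bot]
    show (LinearMap.range dm).mkQ (dm x₁) = 0
    rw [Submodule.mkQ_apply, Submodule.Quotient.mk_eq_zero]
    exact ⟨x₁, rfl⟩
  set ψ : S.moduleCatLeftHomologyData.H →ₗ[B] Q0 :=
    Submodule.liftQ _ ((LinearMap.range dm).mkQ.comp
      (LinearMap.ker S.g.hom).subtype) hcond with hψ
  have hψsurj : Function.Surjective ψ := by
    intro q
    obtain ⟨x, rfl⟩ := (LinearMap.range dm).mkQ_surjective q
    have hx : S.g.hom x = 0 := by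
      have h1 : (S.g : S.X₂ ⟶ S.X₃) = 0 := (hpos 1 one_pos).eq_of_tgt _ _
      calc S.g.hom x = (0 : S.X₂ →ₗ[B] S.X₃) x := by rw [h1]; rfl
      _ = 0 := rfl
    exact ⟨Submodule.Quotient.mk ⟨x, hx⟩, rfl⟩
  -- finiteness of Q0 over k
  haveI h1 : FiniteDimensional k ((Fr k).obj S.moduleCatLeftHomologyData.H) := by
    haveI : FiniteDimensional k ((Fr k).obj (C.homology 0)) := hfd
    exact Module.Finite.equiv (M := (Fr k).obj (C.homology 0))
      ((Fr k).mapIso (e1 ≪≫ S.moduleCatHomologyIso)).toLinearEquiv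
  haveI h2 : FiniteDimensional k ((Fr k).obj Q0) :=
    Module.Finite.of_surjective ((Fr k).map (ModuleCat.ofHom ψ)).hom hψsurj
  obtain ⟨s, hs⟩ : (⊤ : Submodule k ((Fr k).obj Q0)).FG := Module.Finite.fg_top
  -- lift the spanning set
  have hmkq : Function.Surjective (LinearMap.range dm).mkQ := (LinearMap.range dm).mkQ_surjective
  set lift : Q0 → C.X 0 := Function.surjInv hmkq with hlift
  obtain ⟨P, hP, hPmem⟩ := exists_fd_submodule_span k (hlf 0)
    (s.image (fun q => (lift q : ((Fr k).obj (C.X 0) : Type))))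
  refine ⟨P, hP, ?_⟩
  intro x
  have hx : (LinearMap.range dm).mkQ x ∈ Submodule.span k (s : Set ((Fr k).obj Q0)) := by
    rw [hs]; trivial
  have key := span_le_submodule k (M := Q0)
    (Submodule.map (LinearMap.range dm).mkQ P) (s : Set ((Fr k).obj Q0)) ?_ _ hx
  · obtain ⟨p, hp, hp'⟩ := (Submodule.mem_map (f := (LinearMap.range dm).mkQ)).mp key
    refine ⟨p, hp, ?_⟩
    rw [← Submodule.Quotient.eq]
    exact hp'.symm
  · intro q hq
    have : lift q ∈ P := hPmem _ (Finset.mem_image_of_mem _ hq)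
    have h5 := Submodule.mem_map_of_mem (f := (LinearMap.range dm).mkQ) this
    rwa [show (LinearMap.range dm).mkQ (lift q) = q from Function.surjInv_eq hmkq q] at h5

section Seq
variable (C) (hlf : ∀ i : ℤ, IsLocFinOver k (C.X i))
  (hpos : ∀ i : ℤ, 0 < i → Limits.IsZero (C.X i))
  (hfd : IsFinDimOver k (C.homology 0))

noncomputable def seq : ∀ n : ℕ, {N : Submodule B (C.X (Int.negOfNat n)) // FD k N}
  | 0 => ⟨(exists_P0 k hlf hpos hfd).choose, (exists_P0 k hlf hpos hfd).choose_spec.1⟩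
  | n+1 => ⟨(step k hlf (Int.negOfNat n) (Int.negOfNat (n+1)) (seq n).2).choose,
      (step k hlf (Int.negOfNat n) (Int.negOfNat (n+1)) (seq n).2).choose_spec.1⟩

lemma seq_succ_spec (n : ℕ) :
    (∀ x ∈ (seq k C hlf hpos hfd (n+1)).1,
        C.d (Int.negOfNat (n+1)) (Int.negOfNat n) x ∈ (seq k C hlf hpos hfd n).1) ∧
      (∀ y ∈ (seq k C hlf hpos hfd n).1,
        y ∈ LinearMap.range (C.d (Int.negOfNat (n+1)) (Int.negOfNat n)).hom →
        ∃ x ∈ (seq k C hlf hpos hfd (n+1)).1, C.d (Int.negOfNat (n+1)) (Int.negOfNat n) x = y) :=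
  (step k hlf (Int.negOfNat n) (Int.negOfNat (n+1)) (seq k C hlf hpos hfd n).2).choose_spec.2

/-- the chosen submodule in each degree -/
noncomputable def Sz : ∀ i : ℤ, Submodule B (C.X i)
  | .ofNat 0 => (seq k C hlf hpos hfd 0).1
  | .ofNat (_+1) => ⊥
  | .negSucc n => (seq k C hlf hpos hfd (n+1)).1

lemma seq_zero_spec : ∀ x : C.X 0, ∃ p ∈ Sz k C hlf hpos hfd 0,
    x - p ∈ LinearMap.range (C.d (-1) 0).hom :=
  (exists_P0 k hlf hpos hfd).choose_spec.2


lemma fd_Sz (i : ℤ) : FD k (Sz k C hlf hpos hfd i) := by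
  match i with
  | .ofNat 0 => exact (seq k C hlf hpos hfd 0).2
  | .ofNat (n+1) => exact fd_bot k
  | .negSucc n => exact (seq k C hlf hpos hfd (n+1)).2

lemma mem_d_Sz (i j : ℤ) (hij : i + 1 = j) {x : C.X i} (hx : x ∈ Sz k C hlf hpos hfd i) :
    C.d i j x ∈ Sz k C hlf hpos hfd j := by
  match j with
  | .ofNat (m+1) =>
    have hz : IsZero (C.X (Int.ofNat (m+1))) := hpos _ (by rw [Int.ofNat_eq_natCast]; positivity)
    show _ ∈ (⊥ : Submodule B (C.X (Int.ofNat (m+1))))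
    rw [Submodule.mem_bot]
    exact isZero_eq_zero hz _
  | .ofNat 0 =>
    match i with
    | .ofNat n => exfalso; simp only [Int.ofNat_eq_natCast, Int.negSucc_eq] at hij; omega
    | .negSucc 0 => exact (seq_succ_spec k C hlf hpos hfd 0).1 x hx
    | .negSucc (n+1) => exfalso; simp only [Int.ofNat_eq_natCast, Int.negSucc_eq] at hij; omega
  | .negSucc m =>
    match i with
    | .ofNat n => exfalso; simp only [Int.ofNat_eq_natCast, Int.negSucc_eq] at hij; omega
    | .negSucc n =>
      have hn : n = m + 1 := by simp only [Int.negSucc_eq] at hij; omega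
      subst hn
      exact (seq_succ_spec k C hlf hpos hfd (m+1)).1 x hx

lemma sect_Sz (i j : ℤ) (hij : i + 1 = j) {y : C.X j} (hy : y ∈ Sz k C hlf hpos hfd j)
    (hr : y ∈ LinearMap.range (C.d i j).hom) :
    ∃ x ∈ Sz k C hlf hpos hfd i, C.d i j x = y := by
  match j with
  | .ofNat (m+1) =>
    have hy0 : y = 0 := hy
    exact ⟨0, Submodule.zero_mem _, by rw [map_zero, hy0]⟩
  | .ofNat 0 =>
    match i with
    | .ofNat n => exfalso; simp only [Int.ofNat_eq_natCast, Int.negSucc_eq] at hij; omega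
    | .negSucc 0 => exact (seq_succ_spec k C hlf hpos hfd 0).2 y hy hr
    | .negSucc (n+1) => exfalso; simp only [Int.ofNat_eq_natCast, Int.negSucc_eq] at hij; omega
  | .negSucc m =>
    match i with
    | .ofNat n => exfalso; simp only [Int.ofNat_eq_natCast, Int.negSucc_eq] at hij; omega
    | .negSucc n =>
      have hn : n = m + 1 := by simp only [Int.negSucc_eq] at hij; omega
      subst hn
      exact (seq_succ_spec k C hlf hpos hfd (m+1)).2 y hy hr


noncomputable def Dc : CochainComplex (ModuleCat.{0} B) ℤ where
  X i := ModuleCat.of B ↥(Sz k C hlf hpos hfd i)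
  d i j :=
    if h : i + 1 = j then
      ModuleCat.ofHom (LinearMap.codRestrict (Sz k C hlf hpos hfd j)
        (((C.d i j).hom.domRestrict (Sz k C hlf hpos hfd i)))
        (fun x => mem_d_Sz k C hlf hpos hfd i j h x.2))
    else 0
  shape i j h := dif_neg (by simpa using h)
  d_comp_d' i j l hij hjl := by
    simp only [ComplexShape.up_Rel] at hij hjl
    rw [dif_pos hij, dif_pos hjl]
    ext x
    show C.d j l (C.d i j ((Sz k C hlf hpos hfd i).subtype x)) = 0
    have h0 := C.d_comp_d i j l
    calc C.d j l (C.d i j ((Sz k C hlf hpos hfd i).subtype x)) = (C.d i j ≫ C.d j l) ((Sz k C hlf hpos hfd i).subtype x) := rfl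
    _ = (0 : C.X i ⟶ C.X l) ((Sz k C hlf hpos hfd i).subtype x) := by rw [h0]
    _ = 0 := rfl

noncomputable def incl : Dc k C hlf hpos hfd ⟶ C where
  f i := ModuleCat.ofHom (Sz k C hlf hpos hfd i).subtype
  comm' i j hij := by
    simp only [ComplexShape.up_Rel] at hij
    ext x
    dsimp only [Dc]
    rw [dif_pos hij]
    rfl

lemma Dc_d_apply (i j : ℤ) (hij : i + 1 = j) (x : ↥(Sz k C hlf hpos hfd i)) :
    (Sz k C hlf hpos hfd j).subtype ((Dc k C hlf hpos hfd).d i j x) = C.d i j ((Sz k C hlf hpos hfd i).subtype x) := by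
  have : (Dc k C hlf hpos hfd).d i j = ModuleCat.ofHom (LinearMap.codRestrict (Sz k C hlf hpos hfd j)
      (((C.d i j).hom.domRestrict (Sz k C hlf hpos hfd i)))
      (fun x => mem_d_Sz k C hlf hpos hfd i j hij x.2)) := by
    dsimp only [Dc]
    rw [dif_pos hij]
  rw [this]
  rfl

lemma quasi_ne (hhom : ∀ i : ℤ, i ≠ 0 → Limits.IsZero (C.homology i))
    (i : ℤ) (hi : i ≠ 0) : QuasiIsoAt (incl k C hlf hpos hfd) i := by
  have hC : C.ExactAt i := (C.exactAt_iff_isZero_homology i).mpr (hhom i hi)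
  rw [quasiIsoAt_iff_exactAt' (incl k C hlf hpos hfd) i hC]
  have hprev : (ComplexShape.up ℤ).prev i = i - 1 :=
    (ComplexShape.up ℤ).prev_eq' (by simp)
  have hnext : (ComplexShape.up ℤ).next i = i + 1 :=
    (ComplexShape.up ℤ).next_eq' (by simp)
  rw [HomologicalComplex.exactAt_iff' (Dc k C hlf hpos hfd) (i-1) i (i+1) hprev hnext]
  rw [ShortComplex.moduleCat_exact_iff]
  intro x hx
  have hxc : C.d i (i+1) ((Sz k C hlf hpos hfd i).subtype x) = 0 := by
    have hd := Dc_d_apply k C hlf hpos hfd i (i+1) rfl x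
    calc C.d i (i+1) ((Sz k C hlf hpos hfd i).subtype x)
        = (Sz k C hlf hpos hfd (i+1)).subtype ((Dc k C hlf hpos hfd).d i (i+1) x) := hd.symm
      _ = (Sz k C hlf hpos hfd (i+1)).subtype 0 := by rw [show (Dc k C hlf hpos hfd).d i (i+1) x = 0 from hx]; rfl
      _ = 0 := rfl
  have hC' := (HomologicalComplex.exactAt_iff' C (i-1) i (i+1) hprev hnext).mp hC
  rw [ShortComplex.moduleCat_exact_iff] at hC'
  obtain ⟨y, hy⟩ := hC' ((Sz k C hlf hpos hfd i).subtype x) hxc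
  obtain ⟨z, hz, hz'⟩ := sect_Sz k C hlf hpos hfd (i-1) i (by ring) x.2 ⟨y, hy⟩
  refine ⟨⟨z, hz⟩, ?_⟩
  have hd := Dc_d_apply k C hlf hpos hfd (i-1) i (by ring) ⟨z, hz⟩
  refine Subtype.ext ?_
  rw [← hz']
  exact hd




noncomputable abbrev S₁ := HomologicalComplex.sc' (Dc k C hlf hpos hfd) (-1) 0 1
noncomputable abbrev S₂ := HomologicalComplex.sc' C (-1) 0 1
noncomputable abbrev φmap := (HomologicalComplex.shortComplexFunctor' (ModuleCat.{0} B)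
    (ComplexShape.up ℤ) (-1) 0 1).map (incl k C hlf hpos hfd)

noncomputable def phiK : (S₁ k C hlf hpos hfd).moduleCatLeftHomologyData.K ⟶ (S₂ C).moduleCatLeftHomologyData.K :=
  ModuleCat.ofHom (LinearMap.codRestrict (LinearMap.ker (S₂ C).g.hom)
    (((Sz k C hlf hpos hfd 0).subtype).comp (LinearMap.ker (S₁ k C hlf hpos hfd).g.hom).subtype)
    (fun x => by
      have hd := Dc_d_apply k C hlf hpos hfd 0 1 rfl ((LinearMap.ker (S₁ k C hlf hpos hfd).g.hom).subtype x)
      show C.d 0 1 ((Sz k C hlf hpos hfd 0).subtype ((LinearMap.ker (S₁ k C hlf hpos hfd).g.hom).subtype x)) = 0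
      rw [← hd, show (Dc k C hlf hpos hfd).d 0 1 ((LinearMap.ker (S₁ k C hlf hpos hfd).g.hom).subtype x) = 0 from x.2]
      rfl))

noncomputable def phiH : (S₁ k C hlf hpos hfd).moduleCatLeftHomologyData.H ⟶ (S₂ C).moduleCatLeftHomologyData.H :=
  ModuleCat.ofHom (Submodule.mapQ _ _ (phiK k C hlf hpos hfd).hom
    (by
      rintro x ⟨x₁, rfl⟩
      refine ⟨(Sz k C hlf hpos hfd (-1)).subtype x₁, ?_⟩
      refine Subtype.ext ?_
      show C.d (-1) 0 ((Sz k C hlf hpos hfd (-1)).subtype x₁) = (Sz k C hlf hpos hfd 0).subtype _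
      rw [← Dc_d_apply k C hlf hpos hfd (-1) 0 (by norm_num) x₁]
      rfl))

noncomputable def lhmd : ShortComplex.LeftHomologyMapData (φmap k C hlf hpos hfd)
    (S₁ k C hlf hpos hfd).moduleCatLeftHomologyData (S₂ C).moduleCatLeftHomologyData where
  φK := phiK k C hlf hpos hfd
  φH := phiH k C hlf hpos hfd
  commi := by ext x; rfl
  commf' := by
    ext x₁
    refine Subtype.ext ?_
    show (Sz k C hlf hpos hfd 0).subtype ((Dc k C hlf hpos hfd).d (-1) 0 x₁) = C.d (-1) 0 ((Sz k C hlf hpos hfd (-1)).subtype x₁)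
    exact Dc_d_apply k C hlf hpos hfd (-1) 0 (by norm_num) x₁
  commπ := by ext x; rfl

lemma phiH_inj : Function.Injective (phiH k C hlf hpos hfd) := by
  rw [injective_iff_map_eq_zero]
  intro a ha
  obtain ⟨x, rfl⟩ := Submodule.Quotient.mk_surjective _ a
  have ha' : (phiK k C hlf hpos hfd).hom x ∈ LinearMap.range (S₂ C).moduleCatToCycles := (Submodule.Quotient.mk_eq_zero _).mp ha
  refine (Submodule.Quotient.mk_eq_zero _).mpr ?_
  obtain ⟨y, hy⟩ := ha'
  -- y : C.X (-1), toCycles y = phiK x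
  have hy' : C.d (-1) 0 y = (Sz k C hlf hpos hfd 0).subtype ((LinearMap.ker (S₁ k C hlf hpos hfd).g.hom).subtype x) := congrArg Subtype.val hy
  obtain ⟨z, hz, hz'⟩ := sect_Sz k C hlf hpos hfd (-1) 0 (by norm_num) ((LinearMap.ker (S₁ k C hlf hpos hfd).g.hom).subtype x).2 ⟨y, hy'⟩
  refine ⟨⟨z, hz⟩, ?_⟩
  refine Subtype.ext ?_
  refine Subtype.ext ?_
  show (Sz k C hlf hpos hfd 0).subtype ((Dc k C hlf hpos hfd).d (-1) 0 ⟨z, hz⟩) = _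
  rw [Dc_d_apply k C hlf hpos hfd (-1) 0 (by norm_num) ⟨z, hz⟩]
  exact hz'

lemma phiH_surj : Function.Surjective (phiH k C hlf hpos hfd) := by
  intro b
  obtain ⟨w, rfl⟩ := Submodule.Quotient.mk_surjective _ b
  set x0 : C.X 0 := (LinearMap.ker (S₂ C).g.hom).subtype w with hx0
  obtain ⟨p, hp, ⟨y, hy⟩⟩ := seq_zero_spec k C hlf hpos hfd x0
  have hp1 : (Dc k C hlf hpos hfd).d 0 1 ⟨p, hp⟩ = 0 := by
    refine Subtype.ext ?_
    show (Sz k C hlf hpos hfd 1).subtype ((Dc k C hlf hpos hfd).d 0 1 ⟨p, hp⟩) = 0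
    rw [Dc_d_apply k C hlf hpos hfd 0 1 rfl ⟨p, hp⟩]
    exact isZero_eq_zero (hpos 1 one_pos) _
  refine ⟨Submodule.Quotient.mk ⟨⟨p, hp⟩, hp1⟩, ?_⟩
  show Submodule.Quotient.mk (phiK k C hlf hpos hfd ⟨⟨p, hp⟩, hp1⟩) = _
  refine (Submodule.Quotient.eq _).mpr ?_
  refine ⟨-y, ?_⟩
  refine Subtype.ext ?_
  show C.d (-1) 0 (-y) = p - x0
  rw [map_neg, hy]
  abel

lemma quasi_zero : QuasiIsoAt (incl k C hlf hpos hfd) 0 := by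
  rw [quasiIsoAt_iff' (incl k C hlf hpos hfd) (-1) 0 1 ((ComplexShape.up ℤ).prev_eq' (by simp))
    ((ComplexShape.up ℤ).next_eq' (by simp))]
  rw [ShortComplex.quasiIso_iff, (lhmd k C hlf hpos hfd).homologyMap_eq]
  haveI : IsIso (phiH k C hlf hpos hfd) := by
    haveI : Mono (phiH k C hlf hpos hfd) := (ModuleCat.mono_iff_injective _).mpr (phiH_inj k C hlf hpos hfd)
    haveI : Epi (phiH k C hlf hpos hfd) := (ModuleCat.epi_iff_surjective _).mpr (phiH_surj k C hlf hpos hfd)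
    exact isIso_of_mono_of_epi _
  show IsIso (_ ≫ phiH k C hlf hpos hfd ≫ _)
  infer_instance


lemma incl_mono (i : ℤ) : Mono ((incl k C hlf hpos hfd).f i) := by
  rw [ModuleCat.mono_iff_injective]
  exact Subtype.coe_injective


end Seq
end St8

/-- Let `C` be a cochain complex of locally finite `B`-modules with
`C^i = 0` for `i > 0`, `H^i(C) = 0` for `i ≠ 0`, and `H^0(C)` finite-dimensional over
`k`.  Then `C` has a subcomplex `D` all of whose terms are finite-dimensional over `k`
such that the inclusion `D ↪ C` is a quasi-isomorphism. -/
theorem exists_finite_dimensional_subcomplex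
    (C : CochainComplex (ModuleCat.{0} B) ℤ)
    (hlf : ∀ i : ℤ, IsLocFinOver k (C.X i))
    (hpos : ∀ i : ℤ, 0 < i → Limits.IsZero (C.X i))
    (hhom : ∀ i : ℤ, i ≠ 0 → Limits.IsZero (C.homology i))
    (hfd : IsFinDimOver k (C.homology 0)) :
    ∃ (D : CochainComplex (ModuleCat.{0} B) ℤ) (f : D ⟶ C),
      (∀ i : ℤ, IsFinDimOver k (D.X i)) ∧
      (∀ i : ℤ, Mono (f.f i)) ∧
      QuasiIso f := by
  refine ⟨St8.Dc k C hlf hpos hfd, St8.incl k C hlf hpos hfd, ?_, ?_, ?_⟩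
  · intro i
    exact St8.fd_Sz k C hlf hpos hfd i
  · intro i
    exact St8.incl_mono k C hlf hpos hfd i
  · rw [quasiIso_iff]
    intro i
    by_cases hi : i = 0
    · subst hi
      exact St8.quasi_zero k C hlf hpos hfd
    · exact St8.quasi_ne k C hlf hpos hfd hhom i hi
end

section
/- Every bounded cochain complex of locally finite B-modules all of whose cohomology modules are finite-dimensional over k is isomorphic, in the derived category of the abelian category of locally finite B-modules, to a bounded complex of finite-dimensional B-modules. -/
/-!
`k` is a field, `B` an associative unital `k`-algebra.  A `B`-module is
*finite-dimensional* if its underlying `k`-vector space is so, and *locally finite* if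
it is the union of its finite-dimensional `B`-submodules.  The abelian category of
locally finite `B`-modules is formalized as any abelian category `𝒜` together with a
fully faithful exact (additive) functor `ι : 𝒜 ⥤ ModuleCat B` whose essential image
consists exactly of the locally finite `B`-modules.  Isomorphism in the derived
category of `𝒜` is expressed via the localization functor `DerivedCategory.Q`.
-/

universe w v u

open CategoryTheory

variable (k : Type) [Field k] {B : Type} [Ring B] [Algebra k B]

namespace Stmt9

variable {k}

/-- restriction of scalars functor -/
noncomputable abbrev rs : ModuleCat.{0} B ⥤ ModuleCat.{0} k :=
  ModuleCat.restrictScalars (algebraMap k B)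

lemma fd_of_injective {N N' : ModuleCat.{0} B} (f : N ⟶ N') (hf : Function.Injective f)
    (h : IsFinDimOver k N') : IsFinDimOver k N := by
  unfold IsFinDimOver at h ⊢
  haveI := h
  exact FiniteDimensional.of_injective ((rs (k := k)).map f).hom hf

lemma fd_of_surjective {N N' : ModuleCat.{0} B} (f : N ⟶ N') (hf : Function.Surjective f)
    (h : IsFinDimOver k N) : IsFinDimOver k N' := by
  unfold IsFinDimOver at h ⊢
  haveI := h
  exact Module.Finite.of_surjective ((rs (k := k)).map f).hom hf

lemma fd_of_iso {N N' : ModuleCat.{0} B} (e : N ≅ N') (h : IsFinDimOver k N) :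
    IsFinDimOver k N' :=
  fd_of_surjective e.hom (fun y => ⟨e.inv y, by change (e.inv ≫ e.hom) y = y; simp⟩) h

/-- finite dimensionality of a `B`-submodule over `k` -/
def FD (M : ModuleCat.{0} B) (p : Submodule B M) : Prop :=
  IsFinDimOver k (ModuleCat.of B ↥p)

lemma fd_of_subsingleton (N : ModuleCat.{0} B) (h : Subsingleton N) : IsFinDimOver k N := by
  unfold IsFinDimOver
  have : Subsingleton ((rs (k := k)).obj N) := h
  infer_instance

lemma fd_bot (M : ModuleCat.{0} B) : FD (k := k) M ⊥ :=
  fd_of_subsingleton _ inferInstance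

lemma fd_mono {M : ModuleCat.{0} B} {p q : Submodule B M} (hq : q ≤ p)
    (h : FD (k := k) M p) : FD (k := k) M q :=
  fd_of_injective (N := ModuleCat.of B ↥q) (N' := ModuleCat.of B ↥p)
    (ModuleCat.ofHom (Submodule.inclusion hq)) (Submodule.inclusion_injective hq) h

lemma fd_top {M : ModuleCat.{0} B} (h : IsFinDimOver k M) : FD (k := k) M ⊤ :=
  fd_of_injective (N := ModuleCat.of B ↥(⊤ : Submodule B M)) (N' := M)
    (ModuleCat.ofHom (⊤ : Submodule B M).subtype) (Submodule.injective_subtype _) h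

lemma locfin_of_fd {M : ModuleCat.{0} B} (h : IsFinDimOver k M) : IsLocFinOver k M :=
  fun _ => ⟨⊤, trivial, fd_top h⟩

lemma fd_spanning {M : ModuleCat.{0} B} {p : Submodule B M} (h : FD (k := k) M p) :
    ∃ (n : ℕ) (v : Fin n → M), (∀ j, v j ∈ p) ∧
      ∀ x ∈ p, ∃ c : Fin n → k, x = ∑ j, algebraMap k B (c j) • v j := by
  haveI : Module.Finite k ((rs (k := k)).obj (ModuleCat.of B ↥p)) := h
  obtain ⟨t, ht⟩ := Module.finite_def.mp this
  let w : Fin t.card → ((rs (k := k)).obj (ModuleCat.of B ↥p)) :=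
    fun j => (t.equivFin.symm j : _)
  let φ : ↥p →+ M := p.subtype.toAddMonoidHom
  refine ⟨t.card, fun j => φ (w j), fun j => (show ↥p from w j).2, ?_⟩
  intro x hx
  have hmem : (show ((rs (k := k)).obj (ModuleCat.of B ↥p)) from ⟨x, hx⟩) ∈
      Submodule.span k (Set.range w) := by
    have hrange : Set.range w = (t : Set _) := by
      ext y
      constructor
      · rintro ⟨j, rfl⟩; exact (t.equivFin.symm j).2
      · intro hy; exact ⟨t.equivFin ⟨y, hy⟩, by simp [w]⟩
    rw [hrange, ht]; trivial
  obtain ⟨c, hc⟩ := (Submodule.mem_span_range_iff_exists_fun k).mp hmem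
  refine ⟨c, ?_⟩
  have h3 : φ (∑ j, c j • w j) = ∑ j, φ (c j • w j) := map_sum φ _ _
  exact ((congrArg φ hc).symm.trans h3).trans (Finset.sum_congr rfl (fun j _ => rfl))

lemma fd_of_spanned {M : ModuleCat.{0} B} (p : Submodule B M) (γ : Type) [Fintype γ]
    (v : γ → M) (hv : ∀ j, v j ∈ p)
    (hs : ∀ x ∈ p, ∃ c : γ → k, x = ∑ j, algebraMap k B (c j) • v j) :
    FD (k := k) M p := by
  let w : γ → ((rs (k := k)).obj (ModuleCat.of B ↥p)) := fun j => (⟨v j, hv j⟩ : ↥p)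
  let φ : ↥p →+ M := p.subtype.toAddMonoidHom
  have hspan : Submodule.span k (Set.range w) = ⊤ := by
    rw [eq_top_iff]
    rintro y -
    obtain ⟨c, hc⟩ := hs (show ↥p from y).1 (show ↥p from y).2
    rw [Submodule.mem_span_range_iff_exists_fun]
    refine ⟨c, ?_⟩
    have h3 : φ (∑ j, c j • w j) = ∑ j, φ (c j • w j) := map_sum φ _ _
    apply Subtype.ext (p := fun z => z ∈ p)
    exact h3.trans ((Finset.sum_congr rfl (fun j _ => rfl)).trans hc.symm)
  constructor
  rw [← hspan]
  exact Submodule.fg_span (Set.finite_range w)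

lemma fd_sup {M : ModuleCat.{0} B} {p q : Submodule B M} (hp : FD (k := k) M p)
    (hq : FD (k := k) M q) : FD (k := k) M (p ⊔ q) := by
  obtain ⟨n1, v1, hv1, hs1⟩ := fd_spanning hp
  obtain ⟨n2, v2, hv2, hs2⟩ := fd_spanning hq
  refine fd_of_spanned _ (Fin n1 ⊕ Fin n2) (Sum.elim v1 v2) ?_ ?_
  · rintro (j | j)
    · exact Submodule.mem_sup_left (hv1 j)
    · exact Submodule.mem_sup_right (hv2 j)
  · intro x hx
    obtain ⟨y, hy, z, hz, rfl⟩ := Submodule.mem_sup.mp hx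
    obtain ⟨c1, hc1⟩ := hs1 y hy
    obtain ⟨c2, hc2⟩ := hs2 z hz
    refine ⟨Sum.elim c1 c2, ?_⟩
    rw [Fintype.sum_sum_type]
    simp only [Sum.elim_inl, Sum.elim_inr]
    rw [← hc1, ← hc2]

lemma fd_finsetSup {M : ModuleCat.{0} B} {γ : Type} (s : Finset γ)
    (f : γ → Submodule B M) (h : ∀ j ∈ s, FD (k := k) M (f j)) :
    FD (k := k) M (s.sup f) :=
  Finset.sup_induction (fd_bot M) (fun _ h1 _ h2 => fd_sup h1 h2) h


lemma exists_T (M₁ M₂ : ModuleCat.{0} B) (d : M₁ ⟶ M₂) (hloc : IsLocFinOver k M₁)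
    (K : Submodule B M₂) (hK : FD (k := k) M₂ K) :
    ∃ T : Submodule B M₁, FD (k := k) M₁ T ∧ T ≤ Submodule.comap d.hom K ∧
      K ⊓ LinearMap.range d.hom ≤ Submodule.map d.hom T := by
  have hK' : FD (k := k) M₂ (K ⊓ LinearMap.range d.hom) := fd_mono inf_le_left hK
  obtain ⟨n, v, hv, hs⟩ := fd_spanning hK'
  choose m hm using fun j => LinearMap.mem_range.mp (hv j).2
  choose F hmF hFfd using fun j => hloc (m j)
  refine ⟨Finset.univ.sup (fun j => F j ⊓ Submodule.comap d.hom K), ?_, ?_, ?_⟩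
  · exact fd_finsetSup _ _ (fun j _ => fd_mono inf_le_left (hFfd j))
  · exact Finset.sup_le (fun j _ => inf_le_right)
  · rintro x hx
    obtain ⟨c, hc⟩ := hs x hx
    have hmem : ∀ j, algebraMap k B (c j) • m j ∈
        Finset.univ.sup (fun j => F j ⊓ Submodule.comap d.hom K) := by
      intro j
      refine Finset.le_sup (f := fun j => F j ⊓ Submodule.comap d.hom K) (Finset.mem_univ j)
        (Submodule.smul_mem _ _ ⟨hmF j, ?_⟩)
      show d (m j) ∈ K
      rw [hm j]
      exact (hv j).1
    refine Submodule.mem_map.mpr ⟨∑ j, algebraMap k B (c j) • m j, sum_mem (fun j _ => hmem j), ?_⟩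
    rw [map_sum, hc]
    exact Finset.sum_congr rfl (fun j _ => by rw [map_smul, hm j])

lemma exists_S (S : ShortComplex (ModuleCat.{0} B)) (hloc : IsLocFinOver k S.X₂)
    (hH : IsFinDimOver k S.moduleCatLeftHomologyData.H) :
    ∃ N : Submodule B S.X₂, FD (k := k) S.X₂ N ∧ N ≤ LinearMap.ker S.g.hom ∧
      LinearMap.ker S.g.hom ≤ N ⊔ LinearMap.range S.f.hom := by
  obtain ⟨n, v, hv, hs⟩ := fd_spanning (fd_top hH)
  have hsurj : ∀ j, ∃ y : ↥(LinearMap.ker S.g.hom),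
      (LinearMap.range S.moduleCatToCycles).mkQ y = v j :=
    fun j => Submodule.Quotient.mk_surjective _ (v j)
  choose z hz using hsurj
  choose F hzF hFfd using fun j => hloc (z j).1
  refine ⟨Finset.univ.sup (fun j => F j ⊓ LinearMap.ker S.g.hom), ?_, ?_, ?_⟩
  · exact fd_finsetSup _ _ (fun j _ => fd_mono inf_le_left (hFfd j))
  · exact Finset.sup_le (fun j _ => inf_le_right)
  · intro x hx
    obtain ⟨c, hc⟩ := hs ((LinearMap.range S.moduleCatToCycles).mkQ ⟨x, hx⟩) trivial
    set y : ↥(LinearMap.ker S.g.hom) := ∑ j, algebraMap k B (c j) • z j with hy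
    have hyval : (y : S.X₂) = ∑ j, algebraMap k B (c j) • (z j : S.X₂) := by
      rw [hy]
      exact (map_sum ((LinearMap.ker S.g.hom).subtype) _ _).trans
        (Finset.sum_congr rfl (fun j _ => rfl))
    have hyN : (y : S.X₂) ∈ Finset.univ.sup (fun j => F j ⊓ LinearMap.ker S.g.hom) := by
      rw [hyval]
      exact sum_mem (fun j _ =>
        Finset.le_sup (f := fun j => F j ⊓ LinearMap.ker S.g.hom) (Finset.mem_univ j)
          (Submodule.smul_mem _ _ ⟨hzF j, (z j).2⟩))
    have hquot : (LinearMap.range S.moduleCatToCycles).mkQ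
        ((⟨x, hx⟩ : ↥(LinearMap.ker S.g.hom)) - y) = 0 := by
      rw [map_sub, sub_eq_zero]
      refine hc.trans ((Finset.sum_congr rfl (fun j _ =>
        (congrArg (fun w => algebraMap k B (c j) • w) (hz j).symm).trans
          (map_smul _ _ _).symm)).trans (map_sum _ _ _).symm)
    rw [Submodule.mkQ_apply, Submodule.Quotient.mk_eq_zero] at hquot
    obtain ⟨u, hu⟩ := hquot
    have hu' : S.f u = x - (y : S.X₂) := congrArg Subtype.val hu
    refine Submodule.mem_sup.mpr ⟨(y : S.X₂), hyN, S.f u, LinearMap.mem_range_self _ u, ?_⟩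
    rw [hu']; abel


noncomputable def Nsub (M : ℤ → ModuleCat.{0} B) (S : ∀ i, Submodule B (M i))
    (T : ∀ i, Submodule B (M (i + 1)) → Submodule B (M i)) (b : ℤ) :
    ∀ i : ℤ, Submodule B (M i) := fun i =>
  if b < i then ⊥ else S i ⊔ T i (Nsub M S T b (i + 1))
termination_by i => (b + 1 - i).toNat
decreasing_by omega

lemma Nsub_bot (M : ℤ → ModuleCat.{0} B) (S) (T) (b : ℤ) {i : ℤ} (h : b < i) :
    Nsub M S T b i = ⊥ := by rw [Nsub]; simp [h]

lemma Nsub_eq (M : ℤ → ModuleCat.{0} B) (S) (T) (b : ℤ) {i : ℤ} (h : ¬ b < i) :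
    Nsub M S T b i = S i ⊔ T i (Nsub M S T b (i + 1)) := by rw [Nsub]; simp [h]


theorem module_level (ℳ : CochainComplex (ModuleCat.{0} B) ℤ) (a b : ℤ)
    (hz : ∀ i, i < a ∨ b < i → Subsingleton (ℳ.X i))
    (hloc : ∀ i, IsLocFinOver k (ℳ.X i))
    (hH : ∀ i : ℤ, IsFinDimOver k ((ℳ.sc' (i-1) i (i+1)).moduleCatLeftHomologyData.H)) :
    ∃ (𝒩 : CochainComplex (ModuleCat.{0} B) ℤ) (inc : 𝒩 ⟶ ℳ),
      QuasiIso inc ∧ (∀ i, IsFinDimOver k (𝒩.X i)) ∧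
      (∀ i, i < a ∨ b < i → Subsingleton (𝒩.X i)) := by
  classical
  -- choose the cycle-level submodules
  have hSex : ∀ i : ℤ, ∃ N : Submodule B (ℳ.X i), FD (k := k) (ℳ.X i) N ∧
      N ≤ LinearMap.ker (ℳ.d i (i+1)).hom ∧
      LinearMap.ker (ℳ.d i (i+1)).hom ≤ N ⊔ LinearMap.range (ℳ.d (i-1) i).hom :=
    fun i => exists_S (ℳ.sc' (i-1) i (i+1)) (hloc i) (hH i)
  choose S hSfd hSker hSsurj using hSex
  -- choose the boundary-lifting submodules
  have hTex : ∀ (i : ℤ) (K : Submodule B (ℳ.X (i+1))), ∃ T' : Submodule B (ℳ.X i),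
      FD (k := k) (ℳ.X i) T' ∧ T' ≤ Submodule.comap (ℳ.d i (i+1)).hom K ∧
      (FD (k := k) (ℳ.X (i+1)) K →
        K ⊓ LinearMap.range (ℳ.d i (i+1)).hom ≤ Submodule.map (ℳ.d i (i+1)).hom T') := by
    intro i K
    by_cases hK : FD (k := k) (ℳ.X (i+1)) K
    · obtain ⟨T', h1, h2, h3⟩ := exists_T (ℳ.X i) (ℳ.X (i+1)) (ℳ.d i (i+1)) (hloc i) K hK
      exact ⟨T', h1, h2, fun _ => h3⟩
    · exact ⟨⊥, fd_bot _, bot_le, fun h => absurd h hK⟩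
  choose T hTfd hTcomap hTmap using hTex
  set N : ∀ i : ℤ, Submodule B (ℳ.X i) := Nsub (fun i => ℳ.X i) S T b with hNdef
  have hNbot : ∀ i, b < i → N i = ⊥ := fun i h => Nsub_bot _ S T b h
  have hNeq : ∀ i, ¬ b < i → N i = S i ⊔ T i (N (i+1)) := fun i h => Nsub_eq _ S T b h
  -- finite dimensionality
  have hNfd : ∀ i, FD (k := k) (ℳ.X i) (N i) := by
    intro i
    by_cases hbi : b < i
    · rw [hNbot i hbi]; exact fd_bot _
    · rw [hNeq i hbi]; exact fd_sup (hSfd i) (hTfd i (N (i+1)))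
  -- differentials preserve the submodules
  have hNd : ∀ i j : ℤ, ∀ x ∈ N i, ℳ.d i j x ∈ N j := by
    intro i j x hx
    by_cases hij : (ComplexShape.up ℤ).Rel i j
    · obtain rfl : j = i + 1 := hij.symm
      by_cases hbi : b < i
      · rw [hNbot i hbi] at hx
        simp only [Submodule.mem_bot] at hx
        rw [hx, map_zero]; exact zero_mem _
      · rw [hNeq i hbi] at hx
        obtain ⟨s, hs, t, ht, rfl⟩ := Submodule.mem_sup.mp hx
        rw [map_add]
        have h1 : ℳ.d i (i+1) s = 0 := hSker i hs
        rw [h1, zero_add]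
        exact hTcomap i (N (i+1)) ht
    · have h0 : ℳ.d i j x = 0 := by rw [ℳ.shape i j hij]; rfl
      rw [h0]; exact zero_mem _
  -- surjectivity input
  have hP3 : ∀ i : ℤ, LinearMap.ker (ℳ.d i (i+1)).hom ≤
      N i ⊔ LinearMap.range (ℳ.d (i-1) i).hom := by
    intro i
    by_cases hbi : b < i
    · intro x _
      haveI := hz i (Or.inr hbi)
      have : x = 0 := Subsingleton.elim x 0
      rw [this]; exact zero_mem _
    · rw [hNeq i hbi]
      exact le_trans (hSsurj i) (sup_le_sup_right le_sup_left _)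
  -- injectivity input
  have hP4 : ∀ i : ℤ, ∀ x, x ∈ N (i+1) → x ∈ LinearMap.range (ℳ.d i (i+1)).hom →
      x ∈ Submodule.map (ℳ.d i (i+1)).hom (N i) := by
    intro i x hxN hxr
    by_cases hbi : b < i
    · have hb1 : b < i + 1 := by omega
      rw [hNbot _ hb1] at hxN
      simp only [Submodule.mem_bot] at hxN
      rw [hxN]; exact zero_mem _
    · rw [hNeq i hbi]
      have := hTmap i (N (i+1)) (hNfd (i+1)) ⟨hxN, hxr⟩
      exact Submodule.map_mono le_sup_right this
  -- the subcomplex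
  let 𝒩 : CochainComplex (ModuleCat.{0} B) ℤ :=
    { X := fun i => ModuleCat.of B ↥(N i)
      d := fun i j => ModuleCat.ofHom ((ℳ.d i j).hom.restrict (hNd i j))
      shape := fun i j hij => by
        ext x
        show ℳ.d i j x.1 = 0
        rw [ℳ.shape i j hij]; rfl
      d_comp_d' := fun i j l _ _ => by
        ext x
        show ℳ.d j l (ℳ.d i j x.1) = 0
        exact LinearMap.congr_fun (congrArg ModuleCat.Hom.hom (ℳ.d_comp_d i j l)) x.1 }
  let inc : 𝒩 ⟶ ℳ :=
    { f := fun i => ModuleCat.ofHom (N i).subtype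
      comm' := fun i j _ => by ext x; rfl }
  refine ⟨𝒩, inc, ?_, ?_, ?_⟩
  · constructor
    intro i
    obtain ⟨p, rfl⟩ : ∃ p : ℤ, i = p + 1 := ⟨i - 1, by omega⟩
    rw [quasiIsoAt_iff' inc p (p+1) (p+1+1) (by simp) (by simp)]
    -- the short complexes
    set S₁ := 𝒩.sc' p (p+1) (p+1+1) with hS₁
    set S₂ := ℳ.sc' p (p+1) (p+1+1) with hS₂
    have hker : ∀ x : ↥(N (p+1)), x ∈ LinearMap.ker S₁.g.hom → (x : ℳ.X (p+1)) ∈ LinearMap.ker S₂.g.hom :=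
      fun x hx => congrArg Subtype.val hx
    let φK : S₁.moduleCatLeftHomologyData.K ⟶ S₂.moduleCatLeftHomologyData.K :=
      ModuleCat.ofHom ((N (p+1)).subtype.restrict hker)
    have hmapQ : LinearMap.range S₁.moduleCatToCycles ≤
        Submodule.comap φK.hom (LinearMap.range S₂.moduleCatToCycles) := by
      rintro x ⟨u, rfl⟩
      exact ⟨u.1, Subtype.ext rfl⟩
    let φH : S₁.moduleCatLeftHomologyData.H ⟶ S₂.moduleCatLeftHomologyData.H :=
      ModuleCat.ofHom (Submodule.mapQ _ _ φK.hom hmapQ)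
    let γ : ShortComplex.LeftHomologyMapData
        ((HomologicalComplex.shortComplexFunctor' (ModuleCat.{0} B)
          (ComplexShape.up ℤ) p (p+1) (p+1+1)).map inc)
        S₁.moduleCatLeftHomologyData S₂.moduleCatLeftHomologyData :=
      { φK := φK
        φH := φH
        commi := by ext x; rfl
        commf' := by ext x; apply Subtype.ext; rfl
        commπ := by ext x; rfl }
    rw [γ.quasiIso_iff]
    -- φH is bijective
    have hinj : Function.Injective φH := by
      rw [injective_iff_map_eq_zero]
      intro q hq
      obtain ⟨y, rfl⟩ := Submodule.Quotient.mk_surjective _ q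
      obtain ⟨⟨yv, hyvN⟩, hyk⟩ := y
      have hq' : Submodule.Quotient.mk (φK ⟨⟨yv, hyvN⟩, hyk⟩) =
          (0 : S₂.moduleCatLeftHomologyData.H) := hq
      replace hq' := (Submodule.Quotient.mk_eq_zero _).mp hq'
      obtain ⟨u, hu⟩ := hq'
      have hu' : ℳ.d p (p+1) u = yv := congrArg Subtype.val hu
      have hyN : yv ∈ Submodule.map (ℳ.d p (p+1)).hom (N p) := hP4 p yv hyvN ⟨u, hu'⟩
      obtain ⟨n, hnN, hn⟩ := hyN
      refine (Submodule.Quotient.mk_eq_zero _).mpr ?_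
      refine ⟨⟨n, hnN⟩, ?_⟩
      apply Subtype.ext
      apply Subtype.ext
      exact hn
    have hsurj : Function.Surjective φH := by
      intro q
      obtain ⟨z, rfl⟩ := Submodule.Quotient.mk_surjective _ q
      set zv : ↑(ℳ.X (p+1)) := z.1 with hzv
      have hz : zv ∈ LinearMap.ker (ℳ.d (p+1) (p+1+1)).hom := z.2
      have h3 := hP3 (p+1)
      rw [show (p+1-1 : ℤ) = p by omega] at h3
      obtain ⟨nn, hnn, dm, hdm, hsum⟩ := Submodule.mem_sup.mp (h3 hz)
      obtain ⟨m, rfl⟩ := hdm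
      have hnker : ℳ.d (p+1) (p+1+1) nn = 0 := by
        have h4 : ℳ.d (p+1) (p+1+1) (zv - ℳ.d p (p+1) m) = 0 := by
          rw [map_sub]
          have h5 : ℳ.d (p+1) (p+1+1) (ℳ.d p (p+1) m) = 0 :=
            LinearMap.congr_fun (congrArg ModuleCat.Hom.hom (ℳ.d_comp_d p (p+1) (p+1+1))) m
          have h6 : ℳ.d (p+1) (p+1+1) zv = 0 := hz
          rw [h5, h6, sub_zero]
        have h7 : nn = zv - ℳ.d p (p+1) m := by rw [← hsum]; abel
        rw [h7]; exact h4
      refine ⟨Submodule.Quotient.mk ⟨⟨nn, hnn⟩, Subtype.ext hnker⟩, ?_⟩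
      have heq : φH (Submodule.Quotient.mk ⟨⟨nn, hnn⟩, Subtype.ext hnker⟩) =
          Submodule.Quotient.mk (φK ⟨⟨nn, hnn⟩, Subtype.ext hnker⟩) := rfl
      rw [heq]
      refine (Submodule.Quotient.eq _).mpr ?_
      refine ⟨-m, ?_⟩
      apply Subtype.ext
      show ℳ.d p (p+1) (-m) = _
      rw [map_neg]
      show -(ℳ.d p (p+1) m) = nn - zv
      rw [← hsum]; abel
    exact (LinearEquiv.toModuleIso (LinearEquiv.ofBijective φH.hom ⟨hinj, hsurj⟩)).isIso_hom

  · intro i; exact hNfd i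
  · intro i hi
    haveI := hz i hi
    exact ⟨fun x y => Subtype.ext (Subsingleton.elim _ _)⟩

end Stmt9

/-- Every bounded cochain complex of locally finite `B`-modules all of
whose cohomology modules are finite-dimensional over `k` is isomorphic, in the derived
category of the abelian category of locally finite `B`-modules, to a bounded complex of
finite-dimensional `B`-modules. -/
theorem bounded_locfin_complex_iso_finite_dimensional_complex
    (𝒜 : Type u) [Category.{v} 𝒜] [Abelian 𝒜]
    (ι : 𝒜 ⥤ ModuleCat.{0} B) [ι.Full] [ι.Faithful] [ι.Additive]
    [Limits.PreservesFiniteLimits ι] [Limits.PreservesFiniteColimits ι]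
    (himage : ∀ X : 𝒜, IsLocFinOver k (ι.obj X))
    (hessSurj : ∀ M : ModuleCat.{0} B, IsLocFinOver k M →
      ∃ X : 𝒜, Nonempty (ι.obj X ≅ M))
    [HasDerivedCategory.{w} 𝒜]
    (C : CochainComplex 𝒜 ℤ)
    (hbdd : ∃ a b : ℤ, ∀ i : ℤ, (i < a ∨ b < i) → Limits.IsZero (C.X i))
    (hfd : ∀ i : ℤ, IsFinDimOver k (ι.obj (C.homology i))) :
    ∃ D : CochainComplex 𝒜 ℤ,
      (∃ a b : ℤ, ∀ i : ℤ, (i < a ∨ b < i) → Limits.IsZero (D.X i)) ∧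
      (∀ i : ℤ, IsFinDimOver k (ι.obj (D.X i))) ∧
      Nonempty (DerivedCategory.Q.obj C ≅ DerivedCategory.Q.obj D) := by
  obtain ⟨a, b, hab⟩ := hbdd
  set ℳ : CochainComplex (ModuleCat.{0} B) ℤ :=
    (ι.mapHomologicalComplex (ComplexShape.up ℤ)).obj C with hℳ
  have hzM : ∀ i, i < a ∨ b < i → Subsingleton (ℳ.X i) := by
    intro i hi
    have h0 : Limits.IsZero (ℳ.X i) := ι.map_isZero (hab i hi)
    have hid : 𝟙 (ℳ.X i) = 0 := (Limits.IsZero.iff_id_eq_zero _).mp h0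
    constructor
    intro x y
    have hx : x = 0 := LinearMap.congr_fun (congrArg ModuleCat.Hom.hom hid) x
    have hy : y = 0 := LinearMap.congr_fun (congrArg ModuleCat.Hom.hom hid) y
    rw [hx, hy]
  have hlocM : ∀ i, IsLocFinOver k (ℳ.X i) := fun i => himage (C.X i)
  have hHM : ∀ i : ℤ, IsFinDimOver k ((ℳ.sc' (i-1) i (i+1)).moduleCatLeftHomologyData.H) := by
    intro i
    have e2 : C.homology i ≅ (C.sc' (i-1) i (i+1)).homology :=
      C.homologyIsoSc' (i-1) i (i+1) (by simp) (by simp)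
    have e1 : ((C.sc' (i-1) i (i+1)).map ι).homology ≅
        ι.obj ((C.sc' (i-1) i (i+1)).homology) :=
      (C.sc' (i-1) i (i+1)).mapHomologyIso ι
    have e3 : (ℳ.sc' (i-1) i (i+1)).homology ≅ ((C.sc' (i-1) i (i+1)).map ι).homology :=
      Iso.refl _
    exact Stmt9.fd_of_iso
      ((ι.mapIso e2) ≪≫ e1.symm ≪≫ e3.symm ≪≫ (ℳ.sc' (i-1) i (i+1)).moduleCatHomologyIso)
      (hfd i)
  obtain ⟨𝒩, inc, hq, hfdN, hssN⟩ := Stmt9.module_level ℳ a b hzM hlocM hHM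
  have hex : ∀ i, ∃ X : 𝒜, Nonempty (ι.obj X ≅ 𝒩.X i) :=
    fun i => hessSurj _ (Stmt9.locfin_of_fd (hfdN i))
  choose DX hDX using hex
  let e : ∀ i, ι.obj (DX i) ≅ 𝒩.X i := fun i => (hDX i).some
  let D : CochainComplex 𝒜 ℤ :=
    { X := DX
      d := fun i j => ι.preimage ((e i).hom ≫ 𝒩.d i j ≫ (e j).inv)
      shape := fun i j hij => by
        apply ι.map_injective
        rw [ι.map_preimage, 𝒩.shape i j hij]
        simp
      d_comp_d' := fun i j l hij hjl => by
        apply ι.map_injective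
        rw [ι.map_comp, ι.map_preimage, ι.map_preimage]
        simp }
  let φ : D ⟶ C :=
    { f := fun i => ι.preimage ((e i).hom ≫ inc.f i)
      comm' := fun i j hij => by
        apply ι.map_injective
        rw [ι.map_comp, ι.map_comp, ι.map_preimage, ι.map_preimage, ι.map_preimage]
        have hcomm := inc.comm i j
        exact ((Category.assoc _ _ _).trans (congrArg (fun g => (e i).hom ≫ g) hcomm)).trans
          (by simp; rfl) }
  let ε : (ι.mapHomologicalComplex (ComplexShape.up ℤ)).obj D ≅ 𝒩 :=
    HomologicalComplex.Hom.isoOfComponents e (by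
      intro i j hij
      show (e i).hom ≫ 𝒩.d i j = ι.map (D.d i j) ≫ (e j).hom
      have hD : ι.map (D.d i j) = (e i).hom ≫ 𝒩.d i j ≫ (e j).inv := ι.map_preimage _
      rw [hD]
      simp)
  have hmap : (ι.mapHomologicalComplex (ComplexShape.up ℤ)).map φ = ε.hom ≫ inc := by
    ext i x
    exact LinearMap.congr_fun (congrArg ModuleCat.Hom.hom (ι.map_preimage ((e i).hom ≫ inc.f i))) x
  haveI : QuasiIso ((ι.mapHomologicalComplex (ComplexShape.up ℤ)).map φ) := by
    rw [hmap]
    infer_instance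
  haveI hqφ : QuasiIso φ :=
    (HomologicalComplex.quasiIso_map_iff_of_preservesHomology φ ι).mp this
  refine ⟨D, ⟨a, b, ?_⟩, ?_, ⟨(asIso (DerivedCategory.Q.map φ)).symm⟩⟩
  · intro i hi
    have h1 : Limits.IsZero (𝒩.X i) :=
      @ModuleCat.isZero_of_subsingleton _ _ _ (hssN i hi)
    have h2 : Limits.IsZero (ι.obj (DX i)) := h1.of_iso (e i)
    rw [Limits.IsZero.iff_id_eq_zero] at h2 ⊢
    apply ι.map_injective
    rw [ι.map_id, ι.map_zero]
    exact h2
  · intro i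
    exact Stmt9.fd_of_iso (e i).symm (hfdN i)
end

section
/- For all finite-dimensional B-modules M and N and all integers n ≥ 0, the canonical map Ext^n(M,N) computed in the abelian category of finite-dimensional B-modules → Ext^n(M,N) computed in the abelian category of locally finite B-modules, induced by the exact inclusion functor, is bijective. -/
/-!
`k` is a field, `B` an associative unital `k`-algebra.  A `B`-module is
*finite-dimensional* if its underlying `k`-vector space is; it is *locally finite* if it
is the union of its finite-dimensional `B`-submodules.  `Ext^n` computed in a full
abelian subcategory of `B`-modules cut out by a predicate `P` is formalized, for
`n ≥ 1`, via its classical Yoneda description (`n`-fold extensions with middle terms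
satisfying `P`, modulo the equivalence relation generated by morphisms of extensions),
and for `n = 0` it is the `Hom`-group; the canonical map induced by the exact inclusion
of subcategories is induced by the inclusion of extension classes (the identity on
`Hom` for `n = 0`).
-/
open CategoryTheory

variable (k : Type) [Field k] {B : Type} [Ring B] [Algebra k B]

/-- An `n`-fold Yoneda extension of `M` by `N`, i.e. an exact sequence
`0 → N → Y (n) → ⋯ → Y 1 → M → 0`, with all middle terms satisfying the
predicate `P`.  (Here `Y 0` is identified with `M` and `Y (n+1)` with `N`.) -/
structure YExtSeq (P : ModuleCat.{0} B → Prop) (n : ℕ) (M N : ModuleCat.{0} B) where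
  Y : Fin (n + 2) → ModuleCat.{0} B
  d : ∀ i : Fin (n + 1), Y i.succ ⟶ Y i.castSucc
  isoLeft : Y 0 ≅ M
  isoRight : Y (Fin.last (n + 1)) ≅ N
  middle_mem : ∀ i : Fin (n + 2), i ≠ 0 → i ≠ Fin.last (n + 1) → P (Y i)
  injective_top : Function.Injective (d (Fin.last n))
  surjective_bot : Function.Surjective (d 0)
  exact_middle : ∀ i : Fin n, Function.Exact (d i.succ) (d i.castSucc)

/-- A morphism of `n`-fold Yoneda extensions inducing the identity on `M` and `N`. -/
structure YExtSeqHom {P : ModuleCat.{0} B → Prop} {n : ℕ} {M N : ModuleCat.{0} B}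
    (E E' : YExtSeq P n M N) where
  φ : ∀ i : Fin (n + 2), E.Y i ⟶ E'.Y i
  comm : ∀ i : Fin (n + 1), E.d i ≫ φ i.castSucc = φ i.succ ≫ E'.d i
  commLeft : φ 0 ≫ E'.isoLeft.hom = E.isoLeft.hom
  commRight : E.isoRight.inv ≫ φ (Fin.last (n + 1)) = E'.isoRight.inv

/-- The relation whose generated equivalence relation defines Yoneda `Ext^n`. -/
def YExtRel (P : ModuleCat.{0} B → Prop) (n : ℕ) (M N : ModuleCat.{0} B) :
    YExtSeq P n M N → YExtSeq P n M N → Prop :=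
  fun E E' => Nonempty (YExtSeqHom E E')

/-- `Ext^n(M, N)` (`n ≥ 1`), computed in the full abelian subcategory of `B`-modules
determined by `P`, via its Yoneda description: `n`-extensions modulo the equivalence
relation generated by morphisms of extensions. -/
def YExt (P : ModuleCat.{0} B → Prop) (n : ℕ) (M N : ModuleCat.{0} B) : Type 1 :=
  Quot (YExtRel P n M N)

/-- The map on Yoneda extensions induced by an inclusion of subcategories. -/
def YExtSeq.relax {P P' : ModuleCat.{0} B → Prop} (h : ∀ M, P M → P' M) {n : ℕ}
    {M N : ModuleCat.{0} B} (E : YExtSeq P n M N) : YExtSeq P' n M N :=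
  { E with middle_mem := fun i h1 h2 => h _ (E.middle_mem i h1 h2) }

/-- The canonical map `Ext^n` computed in the subcategory cut out by `P` to `Ext^n`
computed in the subcategory cut out by `P'`, for `P ≤ P'`; it is induced by the exact
fully faithful inclusion functor. -/
def YExtMap {P P' : ModuleCat.{0} B → Prop} (h : ∀ M, P M → P' M) (n : ℕ)
    (M N : ModuleCat.{0} B) : YExt P n M N → YExt P' n M N :=
  Quot.map (YExtSeq.relax h)
    (fun _ _ ⟨f⟩ => ⟨{ φ := f.φ, comm := f.comm, commLeft := f.commLeft,
                       commRight := f.commRight }⟩)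

/-- A finite-dimensional `B`-module is locally finite. -/
theorem isLocFinOver_of_isFinDimOver {M : ModuleCat.{0} B} (h : IsFinDimOver k M) :
    IsLocFinOver k M := by
  intro x
  refine ⟨⊤, trivial, ?_⟩
  have h' : FiniteDimensional k ((ModuleCat.restrictScalars (algebraMap k B)).obj M) := h
  exact FiniteDimensional.of_injective
    ((ModuleCat.restrictScalars (algebraMap k B)).map
      ((ModuleCat.ofHom (⊤ : Submodule B M).subtype :
        ModuleCat.of B ↥(⊤ : Submodule B M) ⟶ M))).hom
    (fun a b hab => Subtype.ext hab)

/-- `Ext^n(M,N)` in the full abelian subcategory cut out by `P`, for all `n ≥ 0`: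
`Hom(M,N)` for `n = 0`, and Yoneda extension classes for `n ≥ 1`. -/
def YExtFull (P : ModuleCat.{0} B → Prop) :
    ℕ → ModuleCat.{0} B → ModuleCat.{0} B → Type 1
  | 0, M, N => ULift.{1} (M ⟶ N)
  | n + 1, M, N => YExt P (n + 1) M N

/-- The canonical map on `Ext^n` (`n ≥ 0`) induced by an inclusion of subcategories:
the identity on `Hom` for `n = 0`, the induced map on extension classes for `n ≥ 1`. -/
def YExtFullMap {P P' : ModuleCat.{0} B → Prop} (h : ∀ M, P M → P' M) :
    ∀ (n : ℕ) (M N : ModuleCat.{0} B), YExtFull P n M N → YExtFull P' n M N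
  | 0, _, _, f => f
  | n + 1, M, N, e => YExtMap h (n + 1) M N e

abbrev FinDimSub {M : ModuleCat.{0} B} (A : Submodule B M) : Prop :=
  IsFinDimOver k (ModuleCat.of B ↥A)

def kres {M : ModuleCat.{0} B} (A : Submodule B M) :
    Submodule k ((ModuleCat.restrictScalars (algebraMap k B)).obj M) where
  carrier := (A : Set M)
  add_mem' := A.add_mem
  zero_mem' := A.zero_mem
  smul_mem' c x hx := A.smul_mem (algebraMap k B c) hx

lemma mem_kres {M : ModuleCat.{0} B} {A : Submodule B M} {x} : x ∈ kres k A ↔ x ∈ A :=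
  ⟨fun h => h, fun h => h⟩

def kresEquiv {M : ModuleCat.{0} B} (A : Submodule B M) :
    ↥(kres k A) ≃ₗ[k] ((ModuleCat.restrictScalars (algebraMap k B)).obj (ModuleCat.of B ↥A)) where
  toFun x := ⟨x.1, x.2⟩
  map_add' _ _ := rfl
  map_smul' _ _ := rfl
  invFun x := ⟨x.1, x.2⟩
  left_inv _ := rfl
  right_inv _ := rfl

lemma finDimSub_iff {M : ModuleCat.{0} B} (A : Submodule B M) :
    FinDimSub k A ↔ FiniteDimensional k ↥(kres k A) := by
  constructor
  · intro h
    haveI : FiniteDimensional k ((ModuleCat.restrictScalars (algebraMap k B)).obj (ModuleCat.of B ↥A)) := h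
    exact LinearEquiv.finiteDimensional (kresEquiv k A).symm
  · intro h
    exact LinearEquiv.finiteDimensional (kresEquiv k A)


lemma kres_sup {M : ModuleCat.{0} B} (A A' : Submodule B M) :
    kres k (A ⊔ A') = kres k A ⊔ kres k A' := by
  ext x
  change (show M from x) ∈ A ⊔ A' ↔ _
  rw [Submodule.mem_sup, Submodule.mem_sup]
  constructor
  · rintro ⟨y, hy, z, hz, rfl⟩; exact ⟨y, hy, z, hz, rfl⟩
  · rintro ⟨y, hy, z, hz, rfl⟩; exact ⟨y, hy, z, hz, rfl⟩

lemma kres_map {M M' : ModuleCat.{0} B} (f : M ⟶ M') (A : Submodule B M) :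
    kres k (A.map f.hom) =
      (kres k A).map ((((ModuleCat.restrictScalars (algebraMap k B)).map f).hom :
        ((ModuleCat.restrictScalars (algebraMap k B)).obj M) →ₗ[k]
        ((ModuleCat.restrictScalars (algebraMap k B)).obj M'))) := by
  ext x
  change (show M' from x) ∈ A.map f.hom ↔ _
  rw [Submodule.mem_map, Submodule.mem_map]
  constructor
  · rintro ⟨y, hy, rfl⟩; exact ⟨y, hy, rfl⟩
  · rintro ⟨y, hy, rfl⟩; exact ⟨y, hy, rfl⟩

lemma kres_bot {M : ModuleCat.{0} B} : kres k (⊥ : Submodule B M) = ⊥ := by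
  ext x; change (show M from x) ∈ (⊥ : Submodule B M) ↔ _
  exact (Submodule.mem_bot B).trans (Submodule.mem_bot k (x := x)).symm

lemma kres_top {M : ModuleCat.{0} B} : kres k (⊤ : Submodule B M) = ⊤ := by
  ext x; rw [mem_kres]; exact iff_of_true trivial trivial

lemma finDimSub_bot {M : ModuleCat.{0} B} : FinDimSub k (⊥ : Submodule B M) := by
  rw [finDimSub_iff, kres_bot]
  infer_instance

lemma finDimSub_top {M : ModuleCat.{0} B} (h : IsFinDimOver k M) :
    FinDimSub k (⊤ : Submodule B M) := by
  rw [finDimSub_iff, kres_top]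
  haveI : FiniteDimensional k ((ModuleCat.restrictScalars (algebraMap k B)).obj M) := h
  infer_instance

lemma finDimSub_mono {M : ModuleCat.{0} B} {A A' : Submodule B M} (hle : A ≤ A')
    (h : FinDimSub k A') : FinDimSub k A := by
  rw [finDimSub_iff] at h ⊢
  haveI := h
  exact Submodule.finiteDimensional_of_le (by exact hle : kres k A ≤ kres k A')

lemma finDimSub_sup {M : ModuleCat.{0} B} {A A' : Submodule B M} (h : FinDimSub k A)
    (h' : FinDimSub k A') : FinDimSub k (A ⊔ A') := by
  rw [finDimSub_iff] at h h' ⊢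
  haveI := h; haveI := h'
  rw [kres_sup]
  infer_instance

lemma finDimSub_map {M M' : ModuleCat.{0} B} (f : M ⟶ M') {A : Submodule B M}
    (h : FinDimSub k A) : FinDimSub k (A.map f.hom) := by
  rw [finDimSub_iff] at h ⊢
  haveI := h
  rw [kres_map]
  exact Module.Finite.map (kres k A) ((ModuleCat.restrictScalars (algebraMap k B)).map f).hom

lemma isFinDimOver_of_iso {M M' : ModuleCat.{0} B} (e : M ≅ M') (h : IsFinDimOver k M) :
    IsFinDimOver k M' := by
  haveI : FiniteDimensional k ((ModuleCat.restrictScalars (algebraMap k B)).obj M) := h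
  exact LinearEquiv.finiteDimensional
    (((ModuleCat.restrictScalars (algebraMap k B)).mapIso e).toLinearEquiv)

lemma exists_findim_cover {M1 M2 : ModuleCat.{0} B} (d : M2 ⟶ M1)
    (hM2 : IsLocFinOver k M2) (K : Submodule B M1) (hK : FinDimSub k K)
    (hlift : ∀ x ∈ K, ∃ z, d z = x) :
    ∃ F : Submodule B M2, FinDimSub k F ∧ K ≤ F.map d.hom := by
  haveI : FiniteDimensional k ↥(kres k K) := (finDimSub_iff k K).mp hK
  obtain ⟨s, hs⟩ : (⊤ : Submodule k ↥(kres k K)).FG := Module.finite_def.mp inferInstance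
  choose z hz using fun v : ↥(kres k K) => hlift v.1 v.2
  choose Fv hmem hfin using fun v : ↥(kres k K) => hM2 (z v)
  refine ⟨s.sup Fv, ?_, ?_⟩
  · exact Finset.sup_induction (finDimSub_bot k) (fun _ ha _ hb => finDimSub_sup k ha hb)
      (fun v _ => hfin v)
  · intro x hx
    have hxm : (⟨x, hx⟩ : ↥(kres k K)) ∈ Submodule.span k (s : Set ↥(kres k K)) := by
      rw [hs]; trivial
    have himg := Submodule.mem_map_of_mem (f := (kres k K).subtype) hxm
    rw [Submodule.map_span] at himg
    have hle : Submodule.span k ((kres k K).subtype '' (s : Set ↥(kres k K))) ≤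
        kres k ((s.sup Fv).map d.hom) := by
      rw [Submodule.span_le]
      rintro _ ⟨v, hv, rfl⟩
      exact ⟨z v, (Finset.le_sup hv : Fv v ≤ s.sup Fv) (hmem v), hz v⟩
    exact (mem_kres k).mp (hle himg)

section Approx

variable {m : ℕ} {M N : ModuleCat.{0} B}

/-- A good family of finite-dimensional submodules along an extension sequence. -/
structure GoodS (E : YExtSeq (IsLocFinOver k) m M N)
    (S : ∀ p : Fin (m+2), Submodule B (E.Y p)) : Prop where
  fin : ∀ p, FinDimSub k (S p)
  dcl : ∀ j : Fin (m+1), j.succ ≠ Fin.last (m+1) → (S j.succ).map (E.d j).hom ≤ S j.castSucc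
  zero : ⊤ ≤ S 0
  last : ⊤ ≤ S (Fin.last (m+1))

lemma YfinZero (E : YExtSeq (IsLocFinOver k) m M N) (hM : IsFinDimOver k M) :
    IsFinDimOver k (E.Y 0) := isFinDimOver_of_iso k E.isoLeft.symm hM

lemma Yfinlast (E : YExtSeq (IsLocFinOver k) m M N) (hN : IsFinDimOver k N) :
    IsFinDimOver k (E.Y (Fin.last (m+1))) :=
  isFinDimOver_of_iso k E.isoRight.symm hN

lemma Yloc (E : YExtSeq (IsLocFinOver k) m M N) (hN : IsFinDimOver k N) (j : Fin (m+1)) :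
    IsLocFinOver k (E.Y j.succ) := by
  by_cases h : j.succ = Fin.last (m+1)
  · rw [h]; exact isLocFinOver_of_isFinDimOver k (Yfinlast k E hN)
  · exact E.middle_mem j.succ (Fin.succ_ne_zero j) h

lemma dd_zero (E : YExtSeq (IsLocFinOver k) m M N) (j : Fin m) (x : E.Y j.succ.succ) :
    E.d j.castSucc (E.d j.succ x) = 0 :=
  (E.exact_middle j).apply_apply_eq_zero x

/-- The covering condition for the recursive choice of submodules. -/
def Cov (E : YExtSeq (IsLocFinOver k) m M N) (S : ∀ p : Fin (m+2), Submodule B (E.Y p)) :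
    (p : ℕ) → (hp : p + 1 < m + 2) →
    Submodule B (E.Y ⟨p, Nat.lt_of_succ_lt hp⟩) → Submodule B (E.Y ⟨p+1, hp⟩) → Prop
  | 0, hp, _, F' => ⊤ ≤ F'.map (E.d ⟨0, Nat.lt_of_succ_lt_succ hp⟩).hom
  | q+1, hp, Fp, F' =>
      (S ⟨q+1, Nat.lt_of_succ_lt hp⟩ ⊔ Fp) ⊓
          LinearMap.ker (E.d ⟨q, Nat.lt_of_succ_lt (Nat.lt_of_succ_lt_succ hp)⟩).hom ≤
        F'.map (E.d ⟨q+1, Nat.lt_of_succ_lt_succ hp⟩).hom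

lemma cov_mono {E : YExtSeq (IsLocFinOver k) m M N} {S : ∀ p : Fin (m+2), Submodule B (E.Y p)}
    {p : ℕ} {hp : p + 1 < m + 2} {Fp : Submodule B (E.Y ⟨p, Nat.lt_of_succ_lt hp⟩)}
    {F1 F2 : Submodule B (E.Y ⟨p+1, hp⟩)} (hle : F1 ≤ F2)
    (h : Cov k E S p hp Fp F1) : Cov k E S p hp Fp F2 := by
  cases p with
  | zero => exact le_trans h (Submodule.map_mono hle)
  | succ q => exact le_trans h (Submodule.map_mono hle)

lemma exists_F_succ (E : YExtSeq (IsLocFinOver k) m M N)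
    (hM : IsFinDimOver k M) (hN : IsFinDimOver k N)
    (S : ∀ p : Fin (m+2), Submodule B (E.Y p)) (hS : GoodS k E S)
    (p : ℕ) (hp : p + 1 < m + 2)
    (Fp : Submodule B (E.Y ⟨p, Nat.lt_of_succ_lt hp⟩)) (hFp : FinDimSub k Fp) :
    ∃ F' : Submodule B (E.Y ⟨p+1, hp⟩), FinDimSub k F' ∧ Cov k E S p hp Fp F' ∧
      (p + 1 = m + 1 → F' = ⊤) := by
  have hcov : ∃ F' : Submodule B (E.Y ⟨p+1, hp⟩), FinDimSub k F' ∧ Cov k E S p hp Fp F' := by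
    cases p with
    | zero =>
      obtain ⟨F, hF, hle⟩ := exists_findim_cover k (E.d ⟨0, by omega⟩)
        (Yloc k E hN ⟨0, by omega⟩) ⊤ (finDimSub_top k (YfinZero k E hM))
        (fun x _ => E.surjective_bot x)
      exact ⟨F, hF, fun x hx => hle hx⟩
    | succ q =>
      have h1 : q + 1 < m + 2 := Nat.lt_of_succ_lt hp
      have h2 : q < m + 1 := Nat.lt_of_succ_lt (Nat.lt_of_succ_lt_succ hp)
      have h3 : q + 1 < m + 1 := Nat.lt_of_succ_lt_succ hp
      have hlift : ∀ x : E.Y ⟨q+1, h1⟩, x ∈ (S ⟨q+1, h1⟩ ⊔ Fp) ⊓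
          LinearMap.ker (E.d ⟨q, h2⟩).hom → ∃ z, E.d ⟨q+1, h3⟩ z = x := by
        intro x hx
        exact (E.exact_middle ⟨q, Nat.lt_of_succ_lt_succ (Nat.lt_of_succ_lt_succ hp)⟩ x).mp (LinearMap.mem_ker.mp hx.2)
      obtain ⟨F, hF, hle⟩ := exists_findim_cover k (E.d ⟨q+1, h3⟩)
        (Yloc k E hN ⟨q+1, h3⟩)
        ((S ⟨q+1, h1⟩ ⊔ Fp) ⊓ LinearMap.ker (E.d ⟨q, h2⟩).hom)
        (finDimSub_mono k inf_le_left (finDimSub_sup k (hS.fin _) hFp)) hlift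
      exact ⟨F, hF, hle⟩
  obtain ⟨F, hF, hc⟩ := hcov
  by_cases htop : p + 1 = m + 1
  · refine ⟨⊤, ?_, cov_mono k le_top hc, fun _ => rfl⟩
    have hm' : p = m := by omega
    subst hm'
    exact finDimSub_top k (Yfinlast k E hN)
  · exact ⟨F, hF, hc, fun h => absurd h htop⟩

variable (E : YExtSeq (IsLocFinOver k) m M N)
  (hM : IsFinDimOver k M) (hN : IsFinDimOver k N)
  (S : ∀ p : Fin (m+2), Submodule B (E.Y p)) (hS : GoodS k E S)

/-- Recursive choice of finite-dimensional covering submodules. -/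
noncomputable def Fam :
    (p : ℕ) → (hp : p < m + 2) → {A : Submodule B (E.Y ⟨p, hp⟩) // FinDimSub k A}
  | 0, _ => ⟨⊥, finDimSub_bot k⟩
  | p+1, hp =>
    ⟨(exists_F_succ k E hM hN S hS p hp (Fam p (Nat.lt_of_succ_lt hp)).1
        (Fam p (Nat.lt_of_succ_lt hp)).2).choose,
     (exists_F_succ k E hM hN S hS p hp (Fam p (Nat.lt_of_succ_lt hp)).1
        (Fam p (Nat.lt_of_succ_lt hp)).2).choose_spec.1⟩

lemma Fam_cov (p : ℕ) (hp : p + 1 < m + 2) :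
    Cov k E S p hp (Fam k E hM hN S hS p (Nat.lt_of_succ_lt hp)).1
      (Fam k E hM hN S hS (p+1) hp).1 :=
  (exists_F_succ k E hM hN S hS p hp (Fam k E hM hN S hS p (Nat.lt_of_succ_lt hp)).1
    (Fam k E hM hN S hS p (Nat.lt_of_succ_lt hp)).2).choose_spec.2.1

lemma Fam_top (hp : m + 1 < m + 2) : (Fam k E hM hN S hS (m+1) hp).1 = ⊤ :=
  (exists_F_succ k E hM hN S hS m hp (Fam k E hM hN S hS m (Nat.lt_of_succ_lt hp)).1
    (Fam k E hM hN S hS m (Nat.lt_of_succ_lt hp)).2).choose_spec.2.2 rfl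

/-- The final family of finite-dimensional submodules. -/
noncomputable def AFam (p : ℕ) (hp : p < m + 2) : Submodule B (E.Y ⟨p, hp⟩) :=
  S ⟨p, hp⟩ ⊔ (Fam k E hM hN S hS p hp).1 ⊔
    (if h' : p + 1 < m + 2 then
      ((Fam k E hM hN S hS (p+1) h').1).map (E.d ⟨p, Nat.lt_of_succ_lt_succ h'⟩).hom else ⊥)

lemma A_fin (p : ℕ) (hp : p < m + 2) : FinDimSub k (AFam k E hM hN S hS p hp) := by
  refine finDimSub_sup k (finDimSub_sup k (hS.fin _) (Fam k E hM hN S hS p hp).2) ?_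
  by_cases h' : p + 1 < m + 2
  · rw [dif_pos h']
    exact finDimSub_map k _ (Fam k E hM hN S hS (p+1) h').2
  · rw [dif_neg h']
    exact finDimSub_bot k

lemma A_S (p : ℕ) (hp : p < m + 2) : S ⟨p, hp⟩ ≤ AFam k E hM hN S hS p hp :=
  le_sup_of_le_left le_sup_left

lemma A_F (p : ℕ) (hp : p < m + 2) :
    (Fam k E hM hN S hS p hp).1 ≤ AFam k E hM hN S hS p hp :=
  le_sup_of_le_left le_sup_right

lemma A_zero (hp : 0 < m + 2) : AFam k E hM hN S hS 0 hp = ⊤ :=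
  eq_top_iff.mpr (le_trans hS.zero (A_S k E hM hN S hS 0 hp))

lemma A_last (hp : m + 1 < m + 2) : AFam k E hM hN S hS (m+1) hp = ⊤ :=
  eq_top_iff.mpr (le_trans hS.last (A_S k E hM hN S hS (m+1) hp))

lemma A_dF (p : ℕ) (h : p + 1 < m + 2) :
    ((Fam k E hM hN S hS (p+1) h).1).map (E.d ⟨p, Nat.lt_of_succ_lt_succ h⟩).hom ≤
      AFam k E hM hN S hS p (Nat.lt_of_succ_lt h) := by
  intro x hx
  simp only [AFam]
  apply Submodule.mem_sup_right
  rw [dif_pos h]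
  exact hx

lemma A_d (p : ℕ) (h : p + 1 < m + 2) :
    (AFam k E hM hN S hS (p+1) h).map (E.d ⟨p, Nat.lt_of_succ_lt_succ h⟩).hom ≤
      AFam k E hM hN S hS p (Nat.lt_of_succ_lt h) := by
  have hp1 : p < m + 1 := Nat.lt_of_succ_lt_succ h
  rintro x ⟨y, hy, rfl⟩
  simp only [AFam] at hy
  rcases Submodule.mem_sup.mp hy with ⟨u, hu, v, hv, rfl⟩
  rcases Submodule.mem_sup.mp hu with ⟨a, ha, b, hb, rfl⟩
  rw [map_add, map_add]
  refine Submodule.add_mem _ (Submodule.add_mem _ ?_ ?_) ?_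
  · by_cases hlast : p + 1 = m + 1
    · have hpm : p = m := by omega
      subst hpm
      have hmem : a ∈ (Fam k E hM hN S hS (p+1) h).1 := by
        rw [Fam_top k E hM hN S hS h]; trivial
      exact A_dF k E hM hN S hS p h (Submodule.mem_map_of_mem hmem)
    · have := hS.dcl ⟨p, hp1⟩ (fun hc => hlast (congrArg Fin.val hc))
      exact A_S k E hM hN S hS p (Nat.lt_of_succ_lt h)
        (this (Submodule.mem_map_of_mem ha))
  · exact A_dF k E hM hN S hS p h (Submodule.mem_map_of_mem hb)
  · by_cases h2 : p + 2 < m + 2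
    · rw [dif_pos h2] at hv
      rcases Submodule.mem_map.mp hv with ⟨w, hw, rfl⟩
      have hz : E.d ⟨p, hp1⟩ (E.d ⟨p+1, Nat.lt_of_succ_lt_succ h2⟩ w) = 0 :=
        dd_zero k E ⟨p, by omega⟩ w
      show E.d ⟨p, hp1⟩ (E.d ⟨p+1, Nat.lt_of_succ_lt_succ h2⟩ w) ∈ _
      rw [hz]
      exact Submodule.zero_mem _
    · rw [dif_neg h2, Submodule.mem_bot] at hv
      rw [hv, map_zero]
      exact Submodule.zero_mem _

lemma A_exact (q : ℕ) (h2 : q + 2 < m + 2) :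
    AFam k E hM hN S hS (q+1) (Nat.lt_of_succ_lt h2) ⊓
        LinearMap.ker (E.d ⟨q, Nat.lt_of_succ_lt (Nat.lt_of_succ_lt_succ h2)⟩).hom ≤
      (AFam k E hM hN S hS (q+2) h2).map (E.d ⟨q+1, Nat.lt_of_succ_lt_succ h2⟩).hom := by
  have hq1 : q + 1 < m + 2 := Nat.lt_of_succ_lt h2
  have hq : q < m + 1 := Nat.lt_of_succ_lt (Nat.lt_of_succ_lt_succ h2)
  have hq1' : q + 1 < m + 1 := Nat.lt_of_succ_lt_succ h2
  rintro x ⟨hx, hker⟩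
  simp only [AFam] at hx
  rw [dif_pos h2] at hx
  rcases Submodule.mem_sup.mp hx with ⟨u, hu, v, hv, rfl⟩
  rcases Submodule.mem_map.mp hv with ⟨w, hw, rfl⟩
  have hdw : E.d ⟨q, hq⟩ (E.d ⟨q+1, hq1'⟩ w) = 0 := dd_zero k E ⟨q, by omega⟩ w
  have hu' : u ∈ (S ⟨q+1, hq1⟩ ⊔ (Fam k E hM hN S hS (q+1) hq1).1) ⊓
      LinearMap.ker (E.d ⟨q, hq⟩).hom := by
    refine ⟨hu, LinearMap.mem_ker.mpr ?_⟩
    have h0 := LinearMap.mem_ker.mp hker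
    rw [map_add] at h0
    have h0' : E.d ⟨q, hq⟩ u + E.d ⟨q, hq⟩ (E.d ⟨q+1, hq1'⟩ w) = 0 := h0
    rw [hdw, add_zero] at h0'
    exact h0' 
  have hcov : u ∈ ((Fam k E hM hN S hS (q+2) h2).1).map (E.d ⟨q+1, hq1'⟩).hom :=
    Fam_cov k E hM hN S hS (q+1) h2 hu'
  refine Submodule.add_mem _ (Submodule.map_mono (A_F k E hM hN S hS (q+2) h2) hcov) ?_
  exact Submodule.mem_map_of_mem (A_F k E hM hN S hS (q+2) h2 hw)

lemma A_surj (h : 1 < m + 2) :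
    ⊤ ≤ (AFam k E hM hN S hS 1 h).map (E.d ⟨0, Nat.lt_of_succ_lt_succ h⟩).hom := by
  have h0 : ⊤ ≤ ((Fam k E hM hN S hS 1 h).1).map (E.d ⟨0, Nat.lt_of_succ_lt_succ h⟩).hom :=
    Fam_cov k E hM hN S hS 0 h
  exact le_trans h0 (Submodule.map_mono (A_F k E hM hN S hS 1 h))

/-- The approximating finite-dimensional extension sequence. -/
noncomputable def approxSeq : YExtSeq (IsFinDimOver k) m M N where
  Y p := ModuleCat.of B ↥(AFam k E hM hN S hS p.1 p.2)
  d j := ModuleCat.ofHom <| LinearMap.restrict (E.d j).hom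
    (p := AFam k E hM hN S hS (j.1+1) (Nat.succ_lt_succ j.2))
    (q := AFam k E hM hN S hS j.1 (Nat.lt_of_succ_lt (Nat.succ_lt_succ j.2)))
    (fun x hx => A_d k E hM hN S hS j.1 (Nat.succ_lt_succ j.2)
      (Submodule.mem_map_of_mem hx))
  isoLeft :=
    (((LinearEquiv.ofEq _ _ (A_zero k E hM hN S hS (by omega))).trans
      (Submodule.topEquiv)).toModuleIso) ≪≫ E.isoLeft
  isoRight :=
    (((LinearEquiv.ofEq _ _ (A_last k E hM hN S hS (by omega))).trans
      (Submodule.topEquiv)).toModuleIso) ≪≫ E.isoRight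
  middle_mem p _ _ := A_fin k E hM hN S hS p.1 p.2
  injective_top := fun a b hab =>
    Subtype.ext (E.injective_top (congrArg Subtype.val hab))
  surjective_bot := by
    intro y
    obtain ⟨z, hz, hzeq⟩ :=
      A_surj k E hM hN S hS (by omega) (x := y.1) Submodule.mem_top
    exact ⟨⟨z, hz⟩, Subtype.ext hzeq⟩
  exact_middle := by
    intro i y
    constructor
    · intro h0
      have hi2 : i.1 + 2 < m + 2 := by omega
      have hi1 : i.1 + 1 < m + 2 := Nat.lt_of_succ_lt hi2
      have hi0 : i.1 < m + 1 := Nat.lt_of_succ_lt (Nat.lt_of_succ_lt_succ hi2)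
      have h1 : y.1 ∈ AFam k E hM hN S hS (i.1+1) hi1 ⊓
            LinearMap.ker (E.d ⟨i.1, hi0⟩).hom :=
        ⟨y.2, LinearMap.mem_ker.mpr (congrArg Subtype.val h0)⟩
      obtain ⟨w, hw, hweq⟩ := A_exact k E hM hN S hS i.1 hi2 h1
      exact ⟨⟨w, hw⟩, Subtype.ext hweq⟩
    · rintro ⟨x, rfl⟩
      exact Subtype.ext (dd_zero k E i x.1)

/-- The inclusion morphism from the approximating sequence. -/
noncomputable def approxHom (hle : ∀ X, IsFinDimOver k X → IsLocFinOver k X) :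
    YExtSeqHom ((approxSeq k E hM hN S hS).relax hle) E where
  φ p := ModuleCat.ofHom (AFam k E hM hN S hS p.1 p.2).subtype
  comm j := ModuleCat.hom_ext <| LinearMap.ext fun x => rfl
  commLeft := ModuleCat.hom_ext <| LinearMap.ext fun x => rfl
  commRight := ModuleCat.hom_ext <| LinearMap.ext fun x => rfl

/-- Morphisms into `E` with image in `S` factor through the approximating sequence. -/
noncomputable def homInto (hle : ∀ X, IsFinDimOver k X → IsLocFinOver k X)
    (W : YExtSeq (IsLocFinOver k) m M N) (ψ : YExtSeqHom W E)
    (hr : ∀ (p : Fin (m+2)) (x : W.Y p), ψ.φ p x ∈ S p) :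
    YExtSeqHom W ((approxSeq k E hM hN S hS).relax hle) where
  φ p := ModuleCat.ofHom <| LinearMap.codRestrict (AFam k E hM hN S hS p.1 p.2) (ψ.φ p).hom
    (fun x => A_S k E hM hN S hS p.1 p.2 (hr p x))
  comm j := ModuleCat.hom_ext <| LinearMap.ext fun x => Subtype.ext (ConcreteCategory.congr_hom (ψ.comm j) x)
  commLeft := ModuleCat.hom_ext <| LinearMap.ext fun x => ConcreteCategory.congr_hom ψ.commLeft x
  commRight := ModuleCat.hom_ext <| LinearMap.ext fun y => Subtype.ext (ConcreteCategory.congr_hom ψ.commRight y)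

end Approx

/-- Composition of morphisms of extension sequences. -/
def YExtSeqHom.comp {P : ModuleCat.{0} B → Prop} {n : ℕ} {M N : ModuleCat.{0} B}
    {E1 E2 E3 : YExtSeq P n M N} (f : YExtSeqHom E1 E2) (g : YExtSeqHom E2 E3) :
    YExtSeqHom E1 E3 where
  φ i := f.φ i ≫ g.φ i
  comm i := by
    rw [← Category.assoc, f.comm i, Category.assoc, g.comm i, ← Category.assoc]
  commLeft := by rw [Category.assoc, g.commLeft, f.commLeft]
  commRight := by rw [← Category.assoc, f.commRight, g.commRight]

/-- A morphism between relaxed sequences is a morphism of the original sequences. -/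
def YExtSeqHom.unrelax {P P' : ModuleCat.{0} B → Prop} (h : ∀ X, P X → P' X) {n : ℕ}
    {M N : ModuleCat.{0} B} {E1 E2 : YExtSeq P n M N}
    (f : YExtSeqHom (E1.relax h) (E2.relax h)) : YExtSeqHom E1 E2 :=
  ⟨f.φ, f.comm, f.commLeft, f.commRight⟩

lemma seqY_fin {m : ℕ} {M N : ModuleCat.{0} B} (G : YExtSeq (IsFinDimOver k) m M N)
    (hM : IsFinDimOver k M) (hN : IsFinDimOver k N) (p : Fin (m+2)) :
    IsFinDimOver k (G.Y p) := by
  by_cases h0 : p = 0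
  · rw [h0]; exact isFinDimOver_of_iso k G.isoLeft.symm hM
  by_cases hl : p = Fin.last (m+1)
  · rw [hl]; exact isFinDimOver_of_iso k G.isoRight.symm hN
  · exact G.middle_mem p h0 hl

lemma finDimSub_range {V W : ModuleCat.{0} B} (u : V ⟶ W) (hV : IsFinDimOver k V) :
    FinDimSub k (LinearMap.range u.hom) := by
  rw [LinearMap.range_eq_map]
  exact finDimSub_map k u (finDimSub_top k hV)

lemma range_dcl {m : ℕ} {M N : ModuleCat.{0} B} {W E' : YExtSeq (IsLocFinOver k) m M N}
    (ψ : YExtSeqHom W E') (j : Fin (m+1)) :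
    (LinearMap.range (ψ.φ j.succ).hom).map (E'.d j).hom ≤ LinearMap.range (ψ.φ j.castSucc).hom := by
  rintro x ⟨y, ⟨w, rfl⟩, rfl⟩
  exact ⟨W.d j w, ConcreteCategory.congr_hom (ψ.comm j) w⟩

/-- The base family: everything at the two ends, nothing in the middle. -/
def Sbase {m : ℕ} {M N : ModuleCat.{0} B} (E : YExtSeq (IsLocFinOver k) m M N)
    (p : Fin (m+2)) : Submodule B (E.Y p) :=
  if p.1 = 0 ∨ p.1 = m + 1 then ⊤ else ⊥

lemma sbase_good {m : ℕ} {M N : ModuleCat.{0} B} (E : YExtSeq (IsLocFinOver k) m M N)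
    (hM : IsFinDimOver k M) (hN : IsFinDimOver k N) : GoodS k E (Sbase k E) where
  fin p := by
    unfold Sbase
    split
    · rename_i hc
      rcases hc with h0 | hl
      · have hp : p = 0 := Fin.ext h0
        subst hp
        exact finDimSub_top k (YfinZero k E hM)
      · have hp : p = Fin.last (m+1) := Fin.ext hl
        subst hp
        exact finDimSub_top k (Yfinlast k E hN)
    · exact finDimSub_bot k
  dcl j hne := by
    have h1 : Sbase k E j.succ = ⊥ := by
      unfold Sbase
      rw [if_neg]
      push_neg
      refine ⟨by simp [Fin.val_succ], ?_⟩
      intro hc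
      exact hne (Fin.ext hc)
    rw [h1, Submodule.map_bot]
    exact bot_le
  zero := le_of_eq (by
    unfold Sbase
    rw [if_pos (show (0 : Fin (m+2)).1 = 0 ∨ (0 : Fin (m+2)).1 = m + 1 from Or.inl rfl)])
  last := le_of_eq (by
    unfold Sbase
    rw [if_pos (show (Fin.last (m+1)).1 = 0 ∨ (Fin.last (m+1)).1 = m + 1 from Or.inr rfl)])

lemma sb_good {m : ℕ} {M N : ModuleCat.{0} B} (E' : YExtSeq (IsLocFinOver k) m M N)
    (hM : IsFinDimOver k M) (hN : IsFinDimOver k N)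
    {W1 W2 : YExtSeq (IsLocFinOver k) m M N} (u : YExtSeqHom W1 E') (v : YExtSeqHom W2 E')
    (hW1 : ∀ p, IsFinDimOver k (W1.Y p)) (hW2 : ∀ p, IsFinDimOver k (W2.Y p)) :
    GoodS k E' (fun p => (Sbase k E' p ⊔ LinearMap.range (u.φ p).hom) ⊔
      LinearMap.range (v.φ p).hom) where
  fin p := finDimSub_sup k (finDimSub_sup k ((sbase_good k E' hM hN).fin p)
    (finDimSub_range k _ (hW1 p))) (finDimSub_range k _ (hW2 p))
  dcl j hne := by
    rw [Submodule.map_sup, Submodule.map_sup]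
    refine sup_le (sup_le ?_ ?_) ?_
    · exact le_trans ((sbase_good k E' hM hN).dcl j hne)
        (le_sup_of_le_left le_sup_left)
    · exact le_trans (range_dcl k u j) (le_sup_of_le_left le_sup_right)
    · exact le_trans (range_dcl k v j) le_sup_right
  zero := le_trans (sbase_good k E' hM hN).zero (le_sup_of_le_left le_sup_left)
  last := le_trans (sbase_good k E' hM hN).last (le_sup_of_le_left le_sup_left)

/-- All finite-dimensional modules are locally finite (functional form). -/
def hfd : ∀ X : ModuleCat.{0} B, IsFinDimOver k X → IsLocFinOver k X :=
  fun _ h => isLocFinOver_of_isFinDimOver k h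

section RMap

variable {m : ℕ} {M N : ModuleCat.{0} B} (hM : IsFinDimOver k M) (hN : IsFinDimOver k N)

/-- The finite-dimensional approximation of a locally finite sequence. -/
noncomputable def rSeq (E : YExtSeq (IsLocFinOver k) m M N) :
    YExtSeq (IsFinDimOver k) m M N :=
  approxSeq k E hM hN (Sbase k E) (sbase_good k E hM hN)

/-- The inclusion of the approximation. -/
noncomputable def rHom (E : YExtSeq (IsLocFinOver k) m M N) :
    YExtSeqHom ((rSeq k hM hN E).relax (hfd k)) E :=
  approxHom k E hM hN (Sbase k E) (sbase_good k E hM hN) (hfd k)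

lemma r_wd (E E' : YExtSeq (IsLocFinOver k) m M N)
    (hrel : YExtRel (IsLocFinOver k) m M N E E') :
    Quot.mk (YExtRel (IsFinDimOver k) m M N) (rSeq k hM hN E) =
      Quot.mk (YExtRel (IsFinDimOver k) m M N) (rSeq k hM hN E') := by
  obtain ⟨f⟩ := hrel
  let u := YExtSeqHom.comp (rHom k hM hN E) f
  let v := rHom k hM hN E'
  let S' := fun p => (Sbase k E' p ⊔ LinearMap.range (u.φ p).hom) ⊔ LinearMap.range (v.φ p).hom
  have hS' : GoodS k E' S' := sb_good k E' hM hN u v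
    (fun p => seqY_fin k (rSeq k hM hN E) hM hN p)
    (fun p => seqY_fin k (rSeq k hM hN E') hM hN p)
  have h1 : YExtSeqHom ((rSeq k hM hN E).relax (hfd k))
      ((approxSeq k E' hM hN S' hS').relax (hfd k)) :=
    homInto k E' hM hN S' hS' (hfd k) _ u
      (fun p x => Submodule.mem_sup_left (Submodule.mem_sup_right ⟨x, rfl⟩))
  have h2 : YExtSeqHom ((rSeq k hM hN E').relax (hfd k))
      ((approxSeq k E' hM hN S' hS').relax (hfd k)) :=
    homInto k E' hM hN S' hS' (hfd k) _ v
      (fun p x => Submodule.mem_sup_right ⟨x, rfl⟩)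
  have e1 : Quot.mk (YExtRel (IsFinDimOver k) m M N) (rSeq k hM hN E) =
      Quot.mk (YExtRel (IsFinDimOver k) m M N) (approxSeq k E' hM hN S' hS') :=
    Quot.sound ⟨YExtSeqHom.unrelax (hfd k) h1⟩
  have e2 : Quot.mk (YExtRel (IsFinDimOver k) m M N) (rSeq k hM hN E') =
      Quot.mk (YExtRel (IsFinDimOver k) m M N) (approxSeq k E' hM hN S' hS') :=
    Quot.sound ⟨YExtSeqHom.unrelax (hfd k) h2⟩
  rw [e1, e2]

end RMap

/-- For all finite-dimensional `B`-modules `M`, `N` and all `n ≥ 0`,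
the canonical map from `Ext^n(M,N)` computed in the abelian category of
finite-dimensional `B`-modules to `Ext^n(M,N)` computed in the abelian category of
locally finite `B`-modules, induced by the exact inclusion functor, is bijective. -/
theorem ext_canonical_map_finDim_to_locFin_bijective :
    ∀ (M N : ModuleCat.{0} B), IsFinDimOver k M → IsFinDimOver k N →
      ∀ n : ℕ,
        Function.Bijective
          (YExtFullMap (P := IsFinDimOver k) (P' := IsLocFinOver k)
            (fun _ hM => isLocFinOver_of_isFinDimOver k hM) n M N) := by
  intro M N hM hN n
  cases n with
  | zero => exact Function.bijective_id
  | succ n =>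
    rw [Function.bijective_iff_has_inverse]
    refine ⟨Quot.lift (fun E => Quot.mk (YExtRel (IsFinDimOver k) (n+1) M N)
        (rSeq k hM hN E)) (r_wd k hM hN), ?_, ?_⟩
    · intro x
      induction x using Quot.ind with | _ F => ?_
      exact Quot.sound (r := YExtRel (IsFinDimOver k) (n+1) M N)
        ⟨YExtSeqHom.unrelax (hfd k) (rHom k hM hN (F.relax (hfd k)))⟩
    · intro y
      induction y using Quot.ind with | _ E => ?_
      exact Quot.sound (r := YExtRel (IsLocFinOver k) (n+1) M N) ⟨rHom k hM hN E⟩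
end
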